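/- arXiv:2001.02353 — 9 statements merged into one kernel-verified Lean document; each statement's English description precedes it below -/
import Mathlib

section
/- For every family v = (v_k)_{k∈S} with each v_k ∈ [0,1], the set {u ∈ [0,1] : F_v(u) = 0} has at most 2 elements. -/
/-- Key lemma: a "power series" with all nonnegative coefficients except a strictly
negative linear coefficient cannot have three zeros `a < b < c` in `[0,1]`. -/
lemma key_three_zeros (g : ℕ → ℝ) (hg1 : g 1 < 0) (hgnn : ∀ j, j ≠ 1 → 0 ≤ g j)
    (hsum : ∀ u : ℝ, u ∈ Set.Icc (0:ℝ) 1 → Summable (fun j => g j * u ^ j))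
    (a b c : ℝ) (ha : 0 ≤ a) (hab : a < b) (hbc : b < c) (hc1 : c ≤ 1)
    (Fa : (∑' j : ℕ, g j * a ^ j) = 0) (Fb : (∑' j : ℕ, g j * b ^ j) = 0)
    (Fc : (∑' j : ℕ, g j * c ^ j) = 0) : False := by
  have hb0 : 0 ≤ b := le_of_lt (lt_of_le_of_lt ha hab)
  have hc0 : 0 ≤ c := le_of_lt (lt_of_le_of_lt hb0 hbc)
  have hb1 : b ≤ 1 := le_of_lt (lt_of_lt_of_le hbc hc1)
  have ha1 : a ≤ 1 := le_of_lt (lt_of_lt_of_le hab hb1)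
  have Sa := hsum a ⟨ha, ha1⟩
  have Sb := hsum b ⟨hb0, hb1⟩
  have Sc := hsum c ⟨hc0, hc1⟩
  have h1 : Summable fun j => (c - b) * (g j * a ^ j) := Sa.mul_left _
  have h2 : Summable fun j => (c - a) * (g j * b ^ j) := Sb.mul_left _
  have h3 : Summable fun j => (b - a) * (g j * c ^ j) := Sc.mul_left _
  -- the term function
  set T : ℕ → ℝ := fun j =>
    g j * ((c - b) * a ^ j - (c - a) * b ^ j + (b - a) * c ^ j) with hT
  have hTeq : ∀ j, T j = ((c - b) * (g j * a ^ j) - (c - a) * (g j * b ^ j))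
      + (b - a) * (g j * c ^ j) := by intro j; simp [hT]; ring
  have hTsum : Summable T := by
    apply Summable.congr ((h1.sub h2).add h3)
    intro j; rw [hTeq]
  have hTzero : (∑' j, T j) = 0 := by
    calc (∑' j, T j)
        = ∑' j, (((c - b) * (g j * a ^ j) - (c - a) * (g j * b ^ j))
            + (b - a) * (g j * c ^ j)) := tsum_congr hTeq
      _ = ((c - b) * ∑' j, g j * a ^ j) - ((c - a) * ∑' j, g j * b ^ j)
            + ((b - a) * ∑' j, g j * c ^ j) := by
          rw [Summable.tsum_add (h1.sub h2) h3, Summable.tsum_sub h1 h2, tsum_mul_left, tsum_mul_left,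
            tsum_mul_left]
      _ = 0 := by rw [Fa, Fb, Fc]; ring
  -- strict convexity: the bracket is strictly positive for j ≥ 2
  have hepos : ∀ j, 2 ≤ j → 0 < (c - b) * a ^ j - (c - a) * b ^ j + (b - a) * c ^ j := by
    intro j hj
    have hconv := strictConvexOn_pow (n := j) hj
    have hac : a ≠ c := ne_of_lt (lt_trans hab hbc)
    have hca : (0:ℝ) < c - a := by linarith
    have hcb : (0:ℝ) < c - b := by linarith
    have hba : (0:ℝ) < b - a := by linarith
    have hlam : (0:ℝ) < (c - b) / (c - a) := div_pos hcb hca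
    have hmu : (0:ℝ) < (b - a) / (c - a) := div_pos hba hca
    have hsum1 : (c - b) / (c - a) + (b - a) / (c - a) = 1 := by
      field_simp; ring
    have hpt : (c - b) / (c - a) * a + (b - a) / (c - a) * c = b := by
      field_simp; ring
    have hkey : b ^ j < (c - b) / (c - a) * a ^ j + (b - a) / (c - a) * c ^ j := by
      have h := hconv.2 (Set.mem_Ici.mpr ha) (Set.mem_Ici.mpr hc0) hac hlam hmu hsum1
      simp only [smul_eq_mul] at h
      rwa [hpt] at h
    have h2 : (c - a) * b ^ j <
        (c - a) * ((c - b) / (c - a) * a ^ j + (b - a) / (c - a) * c ^ j) :=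
      (mul_lt_mul_iff_right₀ hca).mpr hkey
    have h3 : (c - a) * ((c - b) / (c - a) * a ^ j + (b - a) / (c - a) * c ^ j)
        = (c - b) * a ^ j + (b - a) * c ^ j := by
      field_simp
    rw [h3] at h2
    linarith
  -- all terms are nonnegative
  have hTnn : ∀ j, 0 ≤ T j := by
    intro j
    rcases j with _ | _ | n
    · exact le_of_eq (by simp only [hT]; ring)
    · exact le_of_eq (by simp only [hT]; ring)
    · exact mul_nonneg (hgnn _ (by omega)) (le_of_lt (hepos _ (by omega)))
  -- hence each term is zero, so g j = 0 for j ≥ 2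
  have hgz : ∀ j, 2 ≤ j → g j = 0 := by
    intro j hj
    by_contra hne
    have hgpos : 0 < g j := lt_of_le_of_ne (hgnn j (by omega)) (Ne.symm hne)
    have hTj : 0 < T j := mul_pos hgpos (hepos j hj)
    have := Summable.tsum_pos hTsum hTnn j hTj
    rw [hTzero] at this
    exact lt_irrefl 0 this
  -- now F reduces to an affine function
  have haff : ∀ u : ℝ, (∑' j : ℕ, g j * u ^ j) = g 0 + g 1 * u := by
    intro u
    rw [tsum_eq_sum (s := {0, 1}) (f := fun j => g j * u ^ j)
      (by intro j hjs; show g j * u ^ j = 0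
          rw [hgz j (by simp at hjs; omega)]; ring)]
    norm_num [Finset.sum_pair]
  rw [haff] at Fb Fc
  have : g 1 * (b - c) = 0 := by linarith
  have hbc' : b - c ≠ 0 := by intro h; linarith
  have : g 1 = 0 := by
    rcases mul_eq_zero.mp this with h | h
    · exact h
    · exact absurd h hbc'
  linarith

theorem stmt_1 (b : ℕ → ℝ)
    (hb_nonneg : ∀ j, j ≠ 1 → 0 ≤ b j) (hb1 : b 1 < 0)
    (hb_sum : Summable b) (hb_total : ∑' j, b j = 0)
    (S : Finset ℕ) (hS : S.Nonempty) (hS1 : 1 ∉ S)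
    (hbS : ∀ k ∈ S, 0 < b k)
    (v : S → ℝ) (hv : ∀ k, v k ∈ Set.Icc (0:ℝ) 1) :
    {u ∈ Set.Icc (0:ℝ) 1 |
      (∑' j : ℕ, if h : j ∈ S then b j * v ⟨j, h⟩ * u ^ j else b j * u ^ j) = 0}.encard ≤ 2 := by
  set g : ℕ → ℝ := fun j => if h : j ∈ S then b j * v ⟨j, h⟩ else b j with hg
  have hcongr : ∀ u : ℝ, (∑' j : ℕ, if h : j ∈ S then b j * v ⟨j, h⟩ * u ^ j
      else b j * u ^ j) = ∑' j : ℕ, g j * u ^ j := by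
    intro u
    refine tsum_congr fun j => ?_
    by_cases h : j ∈ S <;> simp [hg, h]
  have hg1 : g 1 < 0 := by simpa [hg, hS1] using hb1
  have hgnn : ∀ j, j ≠ 1 → 0 ≤ g j := by
    intro j hj
    by_cases h : j ∈ S
    · simp only [hg, dif_pos h]
      exact mul_nonneg (hbS j h).le (hv ⟨j, h⟩).1
    · simpa [hg, dif_neg h] using hb_nonneg j hj
  have hgb : ∀ j, |g j| ≤ |b j| := by
    intro j
    by_cases h : j ∈ S
    · simp only [hg, dif_pos h]
      rw [abs_mul]
      have hb' : (0:ℝ) < b j := hbS j h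
      calc |b j| * |v ⟨j, h⟩| ≤ |b j| * 1 := by
            apply mul_le_mul_of_nonneg_left _ (abs_nonneg _)
            rw [abs_le]; exact ⟨by linarith [(hv ⟨j, h⟩).1], (hv ⟨j, h⟩).2⟩
        _ = |b j| := mul_one _
    · simp [hg, dif_neg h]
  have hsum : ∀ u : ℝ, u ∈ Set.Icc (0:ℝ) 1 → Summable (fun j => g j * u ^ j) := by
    intro u hu
    apply Summable.of_abs
    apply Summable.of_nonneg_of_le (fun j => abs_nonneg _) _ hb_sum.abs
    intro j
    rw [abs_mul]
    calc |g j| * |u ^ j| ≤ |b j| * 1 := by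
          apply mul_le_mul (hgb j) _ (abs_nonneg _) (abs_nonneg _)
          rw [abs_pow]
          exact pow_le_one₀ (abs_nonneg u) (abs_le.mpr ⟨by linarith [hu.1], hu.2⟩)
      _ = |b j| := mul_one _
  by_contra hlt
  push_neg at hlt
  have h3 : (3 : ℕ∞) ≤ _root_.Set.encard {u ∈ Set.Icc (0:ℝ) 1 |
      (∑' j : ℕ, if h : j ∈ S then b j * v ⟨j, h⟩ * u ^ j else b j * u ^ j) = 0} := by
    exact Order.add_one_le_of_lt hlt
  obtain ⟨t, hts, ht3⟩ := Set.exists_subset_encard_eq h3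
  obtain ⟨x, y, z, hxy, hxz, hyz, rfl⟩ := Set.encard_eq_three.mp ht3
  have hx := hts (by simp : x ∈ ({x, y, z} : Set ℝ))
  have hy := hts (by simp : y ∈ ({x, y, z} : Set ℝ))
  have hz := hts (by simp : z ∈ ({x, y, z} : Set ℝ))
  simp only [Set.mem_setOf_eq] at hx hy hz
  rw [hcongr] at hx hy hz
  obtain ⟨⟨hx0, hx1⟩, hxF⟩ := hx
  obtain ⟨⟨hy0, hy1⟩, hyF⟩ := hy
  obtain ⟨⟨hz0, hz1⟩, hzF⟩ := hz
  rcases hxy.lt_or_gt with h1 | h1 <;> rcases hxz.lt_or_gt with h2 | h2 <;>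
    rcases hyz.lt_or_gt with h3 | h3
  · exact key_three_zeros g hg1 hgnn hsum x y z hx0 h1 h3 hz1 hxF hyF hzF
  · exact key_three_zeros g hg1 hgnn hsum x z y hx0 h2 h3 hy1 hxF hzF hyF
  · linarith
  · exact key_three_zeros g hg1 hgnn hsum z x y hz0 h2 h1 hy1 hzF hxF hyF
  · exact key_three_zeros g hg1 hgnn hsum y x z hy0 h1 h2 hz1 hyF hxF hzF
  · linarith
  · exact key_three_zeros g hg1 hgnn hsum y z x hy0 h3 h2 hx1 hyF hzF hxF
  · exact key_three_zeros g hg1 hgnn hsum z y x hz0 h3 h1 hx1 hzF hyF hxF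
end

section
/- For every family v = (v_k)_{k∈S} with each v_k ∈ [0,1], the set {u ∈ [0,1] : F_v(u) = 0} is nonempty, it has a minimum ρ(v), and ρ(v) ≤ ρ, where ρ = min{u ∈ [0,1] : B(u) = 0} is the minimal nonnegative root of B(u) = 0. -/
theorem stmt_2 (b : ℕ → ℝ)
    (hb_nonneg : ∀ j, j ≠ 1 → 0 ≤ b j) (hb1 : b 1 < 0)
    (hb_sum : Summable b) (hb_total : ∑' j, b j = 0)
    (ρ : ℝ) (hρ : IsLeast {u ∈ Set.Icc (0:ℝ) 1 | (∑' j : ℕ, b j * u ^ j) = 0} ρ)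
    (S : Finset ℕ) (hS : S.Nonempty) (hS1 : 1 ∉ S)
    (hbS : ∀ k ∈ S, 0 < b k)
    (v : S → ℝ) (hv : ∀ k, v k ∈ Set.Icc (0:ℝ) 1) :
    ∃ ρv : ℝ, IsLeast {u ∈ Set.Icc (0:ℝ) 1 |
      (∑' j : ℕ, if h : j ∈ S then b j * v ⟨j, h⟩ * u ^ j else b j * u ^ j) = 0} ρv ∧
      ρv ≤ ρ := by
  obtain ⟨⟨⟨hρ0, hρ1⟩, hBρ⟩, _⟩ := hρ
  set c : ℕ → ℝ := fun j => if h : j ∈ S then b j * v ⟨j, h⟩ else b j with hc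
  have hterm : ∀ u : ℝ, (fun j : ℕ =>
      if h : j ∈ S then b j * v ⟨j, h⟩ * u ^ j else b j * u ^ j) = fun j => c j * u ^ j := by
    intro u; funext j; simp only [hc]; split_ifs <;> ring
  have habs : Summable fun j => |b j| := hb_sum.abs
  have hcle : ∀ j, |c j| ≤ |b j| := by
    intro j; simp only [hc]; split_ifs with h
    · have hb := (hbS j h).le
      have hv0 := (hv ⟨j, h⟩).1; have hv1 := (hv ⟨j, h⟩).2
      rw [abs_of_nonneg (mul_nonneg hb hv0), abs_of_nonneg hb]
      nlinarith
    · exact le_refl _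
  have hbound : ∀ (j : ℕ), ∀ u ∈ Set.Icc (0:ℝ) 1, ‖c j * u ^ j‖ ≤ |b j| := by
    intro j u hu
    rw [Real.norm_eq_abs, abs_mul]
    calc |c j| * |u ^ j| ≤ |b j| * 1 := by
          apply mul_le_mul (hcle j) _ (abs_nonneg _) (abs_nonneg _)
          rw [abs_pow]
          exact pow_le_one₀ (abs_nonneg u) (abs_le.2 ⟨le_trans (by norm_num) hu.1, hu.2⟩)
      _ = |b j| := mul_one _
  have hsum : ∀ u ∈ Set.Icc (0:ℝ) 1, Summable fun j => c j * u ^ j := by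
    intro u hu
    exact Summable.of_norm_bounded habs (fun j => hbound j u hu)
  have hsumb : ∀ u ∈ Set.Icc (0:ℝ) 1, Summable fun j => b j * u ^ j := by
    intro u hu
    refine Summable.of_norm_bounded habs (fun j => ?_)
    rw [Real.norm_eq_abs, abs_mul]
    calc |b j| * |u ^ j| ≤ |b j| * 1 := by
          apply mul_le_mul_of_nonneg_left _ (abs_nonneg _)
          rw [abs_pow]
          exact pow_le_one₀ (abs_nonneg u) (abs_le.2 ⟨le_trans (by norm_num) hu.1, hu.2⟩)
      _ = |b j| := mul_one _
  set F : ℝ → ℝ := fun u => ∑' j, c j * u ^ j with hF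
  have hcont : ContinuousOn F (Set.Icc (0:ℝ) 1) :=
    continuousOn_tsum (fun i => (continuousOn_const.mul (continuousOn_pow i))) habs
      (fun n x hx => hbound n x hx)
  have hρIcc : ρ ∈ Set.Icc (0:ℝ) 1 := ⟨hρ0, hρ1⟩
  -- F 0 ≥ 0
  have hF0 : 0 ≤ F 0 := by
    have : F 0 = c 0 := by
      have h0 := tsum_eq_single (L := SummationFilter.unconditional ℕ) (f := fun j : ℕ => c j * (0:ℝ) ^ j) 0
        (fun j hj => by simp [zero_pow hj])
      simpa using h0
    rw [this]
    simp only [hc]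
    split_ifs with h
    · exact mul_nonneg (hbS 0 h).le (hv ⟨0, h⟩).1
    · exact hb_nonneg 0 (by norm_num)
  -- F ρ ≤ 0
  have hFρ : F ρ ≤ 0 := by
    have hle : ∀ j, c j * ρ ^ j ≤ b j * ρ ^ j := by
      intro j
      apply mul_le_mul_of_nonneg_right _ (pow_nonneg hρ0 j)
      simp only [hc]; split_ifs with h
      · have hb := (hbS j h).le
        have hv1 := (hv ⟨j, h⟩).2
        nlinarith
      · exact le_refl _
    calc F ρ ≤ ∑' j, b j * ρ ^ j :=
          Summable.tsum_le_tsum hle (hsum ρ hρIcc) (hsumb ρ hρIcc)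
      _ = 0 := hBρ
  -- IVT on [0, ρ]
  have hsubset : Set.Icc (0:ℝ) ρ ⊆ Set.Icc 0 1 := Set.Icc_subset_Icc le_rfl hρ1
  have hIVT := intermediate_value_Icc' hρ0 (hcont.mono hsubset)
  obtain ⟨x, hxmem, hFx⟩ := hIVT ⟨hFρ, hF0⟩
  -- the set
  set T := {u ∈ Set.Icc (0:ℝ) 1 | F u = 0} with hT
  have hxT : x ∈ T := ⟨hsubset hxmem, hFx⟩
  have hTclosed : IsClosed T := by
    have : T = Set.Icc (0:ℝ) 1 ∩ F ⁻¹' {0} := by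
      ext u; simp [hT, Set.mem_setOf_eq, Set.mem_inter_iff]
    rw [this]
    exact hcont.preimage_isClosed_of_isClosed isClosed_Icc isClosed_singleton
  have hTcompact : IsCompact T :=
    (isCompact_Icc : IsCompact (Set.Icc (0:ℝ) 1)).of_isClosed_subset hTclosed
      (fun u hu => hu.1)
  obtain ⟨ρv, hρv⟩ := hTcompact.exists_isLeast ⟨x, hxT⟩
  refine ⟨ρv, ?_, ?_⟩
  · convert hρv using 3 with u
    case e'_2 => rfl
    rw [hterm u]
  · exact le_trans (hρv.2 hxT) hxmem.2
end

section
/- ρ = 1 if and only if Σ_{j=2}^∞ (j−1) b_j ≤ b_0, where the left-hand side is a sum of nonnegative terms with value in [0, +∞]. -/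
open Set Finset

private lemma stmt3_summable_pow (b : ℕ → ℝ) (hb : Summable b) {u : ℝ}
    (h0 : 0 ≤ u) (h1 : u ≤ 1) : Summable (fun n => b n * u ^ n) := by
  apply Summable.of_norm_bounded hb.abs
  intro n
  rw [Real.norm_eq_abs, abs_mul, abs_pow, abs_of_nonneg h0]
  calc |b n| * u ^ n ≤ |b n| * 1 :=
        mul_le_mul_of_nonneg_left (pow_le_one₀ h0 h1) (abs_nonneg _)
    _ = |b n| := mul_one _

private lemma stmt3_summable_term (b : ℕ → ℝ) (hb : Summable b) {u : ℝ}
    (h0 : 0 ≤ u) (h1 : u ≤ 1) :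
    Summable (fun n => b (n + 2) * (u ^ (n + 2) - u)) := by
  have hs : Summable (fun n => b n * u ^ n) := stmt3_summable_pow b hb h0 h1
  have hs2 : Summable (fun n => b (n + 2) * u ^ (n + 2)) :=
    (summable_nat_add_iff (f := fun n => b n * u ^ n) 2).2 hs
  have hb2 : Summable (fun n => b (n + 2)) := (summable_nat_add_iff (f := b) 2).2 hb
  have := hs2.sub (hb2.mul_right u)
  refine this.congr fun n => ?_
  ring

private lemma stmt3_B_eq (b : ℕ → ℝ) (hb : Summable b) (h0 : ∑' j, b j = 0)
    {u : ℝ} (hu0 : 0 ≤ u) (hu1 : u ≤ 1) :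
    ∑' j, b j * u ^ j = b 0 * (1 - u) + ∑' n, b (n + 2) * (u ^ (n + 2) - u) := by
  have hs : Summable (fun n => b n * u ^ n) := stmt3_summable_pow b hb hu0 hu1
  have hs1 : Summable (fun n => b (n + 1) * u ^ (n + 1)) := (summable_nat_add_iff (f := fun n => b n * u ^ n) 1).2 hs
  have hs2 : Summable (fun n => b (n + 2) * u ^ (n + 2)) := (summable_nat_add_iff (f := fun n => b n * u ^ n) 2).2 hs
  have hb1 : Summable (fun n => b (n + 1)) := (summable_nat_add_iff (f := b) 1).2 hb
  have hb2 : Summable (fun n => b (n + 2)) := (summable_nat_add_iff (f := b) 2).2 hb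
  have e1 : ∑' j, b j * u ^ j
      = b 0 * u ^ 0 + (b 1 * u ^ 1 + ∑' n, b (n + 2) * u ^ (n + 2)) := by
    rw [Summable.tsum_eq_zero_add hs, Summable.tsum_eq_zero_add hs1]
  have e0 : (0 : ℝ) = b 0 + (b 1 + ∑' n, b (n + 2)) := by
    rw [← h0, Summable.tsum_eq_zero_add hb, Summable.tsum_eq_zero_add hb1]
  have e2 : ∑' n, b (n + 2) * (u ^ (n + 2) - u)
      = (∑' n, b (n + 2) * u ^ (n + 2)) - (∑' n, b (n + 2)) * u := by
    rw [← tsum_mul_right, ← Summable.tsum_sub hs2 (hb2.mul_right u)]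
    exact tsum_congr fun n => by ring
  rw [e1, e2]
  simp only [pow_zero, pow_one]
  linear_combination (-u) * e0

private lemma stmt3_contOn (b : ℕ → ℝ) (hb : Summable b) :
    ContinuousOn (fun u : ℝ => ∑' j, b j * u ^ j) (Set.Icc 0 1) := by
  rw [continuousOn_iff_continuous_restrict]
  have heq : (Set.Icc (0:ℝ) 1).restrict (fun u : ℝ => ∑' j, b j * u ^ j)
      = fun x : Set.Icc (0:ℝ) 1 => ∑' j, b j * (x : ℝ) ^ j := rfl
  show Continuous (fun x : Set.Icc (0:ℝ) 1 => ∑' j, b j * (x : ℝ) ^ j)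
  apply continuous_tsum (u := fun n => |b n|)
  · intro i; continuity
  · exact hb.abs
  · intro n x
    obtain ⟨hx0, hx1⟩ := x.2
    rw [Real.norm_eq_abs, abs_mul, abs_pow, abs_of_nonneg hx0]
    calc |b n| * (x : ℝ) ^ n ≤ |b n| * 1 :=
          mul_le_mul_of_nonneg_left (pow_le_one₀ hx0 hx1) (abs_nonneg _)
      _ = |b n| := mul_one _

private lemma stmt3_B_pos (b : ℕ → ℝ)
    (hb_nonneg : ∀ j, j ≠ 1 → 0 ≤ b j) (hb1 : b 1 < 0)
    (hb : Summable b) (h0 : ∑' j, b j = 0)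
    (hf : Summable (fun n : ℕ => ((n : ℝ) + 1) * b (n + 2)))
    (hT : ∑' n : ℕ, ((n : ℝ) + 1) * b (n + 2) ≤ b 0)
    {u : ℝ} (hu0 : 0 ≤ u) (hu1 : u < 1) :
    0 < ∑' j, b j * u ^ j := by
  have hb2 : Summable (fun n => b (n + 2)) := (summable_nat_add_iff (f := b) 2).2 hb
  have hb1' : Summable (fun n => b (n + 1)) := (summable_nat_add_iff (f := b) 1).2 hb
  set T := ∑' n : ℕ, ((n : ℝ) + 1) * b (n + 2) with hTdef
  have hTnn : 0 ≤ T :=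
    tsum_nonneg fun n => mul_nonneg (by positivity) (hb_nonneg _ (by omega))
  have hY_le_T : (∑' n, b (n + 2)) ≤ T := by
    apply hb2.tsum_le_tsum _ hf
    intro n
    have hbn := hb_nonneg (n + 2) (by omega)
    nlinarith [Nat.cast_nonneg (α := ℝ) n]
  have e0 : (0 : ℝ) = b 0 + (b 1 + ∑' n, b (n + 2)) := by
    rw [← h0, Summable.tsum_eq_zero_add hb, Summable.tsum_eq_zero_add hb1']
  have hb0pos : 0 < b 0 := by linarith
  rw [stmt3_B_eq b hb h0 hu0 hu1.le]
  have hXbound : (-((1 - u) * u)) * T ≤ ∑' n, b (n + 2) * (u ^ (n + 2) - u) := by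
    rw [hTdef, ← tsum_mul_left]
    apply (hf.mul_left _).tsum_le_tsum _ (stmt3_summable_term b hb hu0 hu1.le)
    intro n
    have hbn := hb_nonneg (n + 2) (by omega)
    have hpow : 1 + ((n : ℝ) + 1) * (u - 1) ≤ u ^ (n + 1) := by
      have h := one_add_mul_le_pow (a := u - 1) (by linarith) (n + 1)
      have h2 : (1 : ℝ) + (u - 1) = u := by ring
      rw [h2] at h
      push_cast at h
      exact h
    have hps : u ^ (n + 2) = u ^ (n + 1) * u := pow_succ u (n + 1)
    nlinarith [mul_nonneg (mul_nonneg hbn hu0)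
      (by linarith : (0:ℝ) ≤ u ^ (n + 1) - (1 + ((n : ℝ) + 1) * (u - 1)))]
  nlinarith [mul_pos (mul_pos (by linarith : (0:ℝ) < 1 - u) (by linarith : (0:ℝ) < 1 - u)) hb0pos,
    mul_nonneg (mul_nonneg (by linarith : (0:ℝ) ≤ 1 - u) hu0) (by linarith : (0:ℝ) ≤ b 0 - T)]

theorem stmt_3 (b : ℕ → ℝ)
    (hb_nonneg : ∀ j, j ≠ 1 → 0 ≤ b j) (hb1 : b 1 < 0)
    (hb_sum : Summable b) (hb_total : ∑' j, b j = 0)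
    (ρ : ℝ) (hρ : IsLeast {u ∈ Set.Icc (0:ℝ) 1 | (∑' j : ℕ, b j * u ^ j) = 0} ρ) :
    ρ = 1 ↔ (∑' n : ℕ, ENNReal.ofReal ((n + 1 : ℝ) * b (n + 2))) ≤ ENNReal.ofReal (b 0) := by
  have hb0 : 0 ≤ b 0 := hb_nonneg 0 (by omega)
  have hfnn : ∀ n : ℕ, 0 ≤ ((n : ℝ) + 1) * b (n + 2) := fun n =>
    mul_nonneg (by positivity) (hb_nonneg _ (by omega))
  have hB0 : (∑' j : ℕ, b j * (0 : ℝ) ^ j) = b 0 := by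
    rw [tsum_eq_single 0 (fun n hn => by simp [zero_pow hn])]
    simp
  obtain ⟨⟨⟨hρ0, hρle1⟩, hρroot⟩, hleast⟩ := hρ
  constructor
  · -- ρ = 1 → sum ≤ b 0
    intro hρ1
    by_contra hS
    push_neg at hS
    rw [ENNReal.tsum_eq_iSup_sum, lt_iSup_iff] at hS
    obtain ⟨s, hs⟩ := hS
    rw [← ENNReal.ofReal_sum_of_nonneg (fun i _ => hfnn i)] at hs
    have hsf : b 0 < ∑ n ∈ s, ((n : ℝ) + 1) * b (n + 2) :=
      (ENNReal.ofReal_lt_ofReal_iff_of_nonneg hb0).1 hs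
    set Q : ℝ → ℝ := fun u => b 0 - ∑ n ∈ s,
      b (n + 2) * (u * ∑ k ∈ Finset.range (n + 1), u ^ k) with hQdef
    have hQcont : Continuous Q := by
      apply Continuous.sub continuous_const
      apply continuous_finset_sum
      intro n _
      continuity
    have hQ1 : Q 1 < 0 := by
      have he : ∑ n ∈ s, b (n + 2) * ((1:ℝ) * ∑ k ∈ Finset.range (n + 1), (1:ℝ) ^ k)
          = ∑ n ∈ s, ((n : ℝ) + 1) * b (n + 2) := by
        apply Finset.sum_congr rfl
        intro n _
        simp [mul_comm]
      have : Q 1 = b 0 - ∑ n ∈ s, ((n : ℝ) + 1) * b (n + 2) := by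
        rw [hQdef]
        simp only []
        rw [he]
      rw [this]
      linarith
    have hne : (nhdsWithin (1:ℝ) (Set.Ico 0 1)).NeBot := by
      rw [← mem_closure_iff_nhdsWithin_neBot, closure_Ico (by norm_num : (0:ℝ) ≠ 1)]
      exact ⟨by norm_num, le_refl 1⟩
    have hev : ∀ᶠ u in nhdsWithin (1:ℝ) (Set.Ico 0 1), Q u < 0 :=
      Filter.Tendsto.eventually_lt_const hQ1 (hQcont.continuousAt.continuousWithinAt)
    obtain ⟨u, hQu, hu0, hu1⟩ := (hev.and eventually_mem_nhdsWithin).exists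
    -- B u < 0
    have hterm : ∀ n : ℕ, b (n + 2) * (u ^ (n + 2) - u)
        = -((1 - u) * (b (n + 2) * (u * ∑ k ∈ Finset.range (n + 1), u ^ k))) := by
      intro n
      have g := geom_sum_mul u (n + 1)
      linear_combination (-(b (n + 2) * u)) * g
    have hsum_eq : ∑ n ∈ s, b (n + 2) * (u ^ (n + 2) - u)
        = -((1 - u) * ∑ n ∈ s, b (n + 2) * (u * ∑ k ∈ Finset.range (n + 1), u ^ k)) := by
      rw [Finset.mul_sum, ← Finset.sum_neg_distrib]
      exact Finset.sum_congr rfl fun n _ => hterm n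
    have htp : ∀ n : ℕ, b (n + 2) * (u ^ (n + 2) - u) ≤ 0 := by
      intro n
      have hbn := hb_nonneg (n + 2) (by omega)
      have hpw : u ^ (n + 2) ≤ u := by
        calc u ^ (n + 2) ≤ u ^ 1 := pow_le_pow_of_le_one hu0 hu1.le (by omega)
          _ = u := pow_one u
      have := mul_le_mul_of_nonneg_left (sub_nonpos.2 hpw) hbn
      simpa using this
    have hX : ∑' n : ℕ, b (n + 2) * (u ^ (n + 2) - u)
        ≤ ∑ n ∈ s, b (n + 2) * (u ^ (n + 2) - u) := by
      have hsm := stmt3_summable_term b hb_sum hu0 hu1.le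
      have h := hsm.neg.sum_le_tsum (f := fun n : ℕ => -(b (n + 2) * (u ^ (n + 2) - u))) s
        (fun i _ => neg_nonneg.2 (htp i))
      rw [tsum_neg, Finset.sum_neg_distrib] at h
      linarith
    have hBu : (∑' j : ℕ, b j * u ^ j) < 0 := by
      rw [stmt3_B_eq b hb_sum hb_total hu0 hu1.le]
      have hQu' : b 0 - Q u ≤ 0 → True := fun _ => trivial
      have hfac : ∑ n ∈ s, b (n + 2) * (u * ∑ k ∈ Finset.range (n + 1), u ^ k) = b 0 - Q u := by
        rw [hQdef]; ring
      rw [hfac] at hsum_eq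
      nlinarith [mul_neg_of_pos_of_neg (by linarith : (0:ℝ) < 1 - u) hQu]
    -- IVT
    have hcont : ContinuousOn (fun v : ℝ => ∑' j : ℕ, b j * v ^ j) (Set.Icc 0 u) :=
      (stmt3_contOn b hb_sum).mono (Set.Icc_subset_Icc le_rfl hu1.le)
    have h0mem : (0:ℝ) ∈ Set.Icc ((fun v : ℝ => ∑' j : ℕ, b j * v ^ j) u)
        ((fun v : ℝ => ∑' j : ℕ, b j * v ^ j) 0) := by
      constructor
      · exact le_of_lt hBu
      · simpa [hB0] using hb0
    obtain ⟨v, hvI, hv⟩ := intermediate_value_Icc' hu0 hcont h0mem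
    have hvmem : v ∈ {w ∈ Set.Icc (0:ℝ) 1 | (∑' j : ℕ, b j * w ^ j) = 0} :=
      ⟨⟨hvI.1, hvI.2.trans hu1.le⟩, hv⟩
    have := hleast hvmem
    rw [hρ1] at this
    linarith [hvI.2, hu1]
  · -- sum ≤ b 0 → ρ = 1
    intro hS
    have hfin : (∑' n : ℕ, ENNReal.ofReal ((n + 1 : ℝ) * b (n + 2))) ≠ ⊤ :=
      ne_top_of_le_ne_top ENNReal.ofReal_ne_top hS
    have hf : Summable (fun n : ℕ => ((n : ℝ) + 1) * b (n + 2)) := by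
      have h := ENNReal.summable_toReal hfin
      refine h.congr fun n => ?_
      rw [ENNReal.toReal_ofReal (hfnn n)]
    have hT : (∑' n : ℕ, ((n : ℝ) + 1) * b (n + 2)) ≤ b 0 := by
      have he := ENNReal.ofReal_tsum_of_nonneg hfnn hf
      rw [← he] at hS
      exact (ENNReal.ofReal_le_ofReal_iff hb0).1 hS
    by_contra hne
    have hlt : ρ < 1 := lt_of_le_of_ne hρle1 hne
    have := stmt3_B_pos b hb_nonneg hb1 hb_sum hb_total hf hT hρ0 hlt
    rw [hρroot] at this
    exact lt_irrefl 0 this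
end

section
/- If v = (v_k)_{k∈S} satisfies v_k ∈ [0,1) for every k ∈ S, then ρ(v) < 1, the series F_v'(u) = Σ_{j∉S, j≥1} j b_j u^{j−1} + Σ_{k∈S} k b_k v_k u^{k−1} converges absolutely at u = ρ(v), and F_v'(ρ(v)) < 0. -/
private lemma geom_ineq (ρ : ℝ) (hρ0 : 0 ≤ ρ) (hρ1 : ρ ≤ 1) (j : ℕ) :
    (1 - ρ) * ((j : ℝ) * ρ ^ (j - 1)) ≤ 1 - ρ ^ j := by
  have hsum : (j : ℝ) * ρ ^ (j - 1) ≤ ∑ i ∈ Finset.range j, ρ ^ i := by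
    have := Finset.card_nsmul_le_sum (Finset.range j) (fun i => ρ ^ i) (ρ ^ (j - 1))
      (fun i hi => pow_le_pow_of_le_one hρ0 hρ1 (by
        simp only [Finset.mem_range] at hi; omega))
    simpa [nsmul_eq_mul] using this
  have hg : (1 - ρ) * ∑ i ∈ Finset.range j, ρ ^ i = 1 - ρ ^ j := by
    have := geom_sum_mul ρ j
    nlinarith [this]
  nlinarith [mul_le_mul_of_nonneg_left hsum (by linarith : (0:ℝ) ≤ 1 - ρ)]

theorem stmt_4 (b : ℕ → ℝ)
    (hb_nonneg : ∀ j, j ≠ 1 → 0 ≤ b j) (hb1 : b 1 < 0)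
    (hb_sum : Summable b) (hb_total : ∑' j, b j = 0)
    (S : Finset ℕ) (hS : S.Nonempty) (hS1 : 1 ∉ S)
    (hbS : ∀ k ∈ S, 0 < b k)
    (v : S → ℝ) (hv : ∀ k, v k ∈ Set.Ico (0:ℝ) 1)
    (ρv : ℝ) (hρv : IsLeast {u ∈ Set.Icc (0:ℝ) 1 |
      (∑' j : ℕ, if h : j ∈ S then b j * v ⟨j, h⟩ * u ^ j else b j * u ^ j) = 0} ρv) :
    ρv < 1 ∧
    Summable (fun j : ℕ =>
      |if h : j ∈ S then (j : ℝ) * b j * v ⟨j, h⟩ * ρv ^ (j - 1)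
       else (j : ℝ) * b j * ρv ^ (j - 1)|) ∧
    (∑' j : ℕ, if h : j ∈ S then (j : ℝ) * b j * v ⟨j, h⟩ * ρv ^ (j - 1)
       else (j : ℝ) * b j * ρv ^ (j - 1)) < 0 := by
  set c : ℕ → ℝ := fun j => if h : j ∈ S then b j * v ⟨j, h⟩ else b j with hc
  have hle1 : ∀ (j : ℕ) (h : j ∈ S), v ⟨j, h⟩ ≤ 1 := fun j h => le_of_lt (hv _).2
  have hcle : ∀ j, c j ≤ b j := by
    intro j
    simp only [hc]
    split
    · rename_i h
      nlinarith [(hv (⟨j, h⟩ : S)).1, (hv (⟨j, h⟩ : S)).2, hbS j h]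
    · exact le_rfl
  have hcabs : ∀ j, |c j| ≤ |b j| := by
    intro j
    simp only [hc]
    split
    · rename_i h
      rw [abs_mul]
      have hb := (hbS j h).le
      have h0 := (hv (⟨j, h⟩ : S)).1
      have h1 := (hv (⟨j, h⟩ : S)).2.le
      rw [abs_of_nonneg hb, abs_of_nonneg h0]
      nlinarith
    · exact le_rfl
  have hcs : Summable c := by
    apply Summable.of_norm_bounded hb_sum.abs
    intro j
    simpa using hcabs j
  -- rewrite the root hypothesis
  have hFeq : ∀ u : ℝ,
      (∑' j : ℕ, if h : j ∈ S then b j * v ⟨j, h⟩ * u ^ j else b j * u ^ j)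
        = ∑' j : ℕ, c j * u ^ j := by
    intro u
    refine tsum_congr fun j => ?_
    simp only [hc]
    split <;> ring
  have hρ0 : 0 ≤ ρv := hρv.1.1.1
  have hρ1 : ρv ≤ 1 := hρv.1.1.2
  have hFρ : ∑' j : ℕ, c j * ρv ^ j = 0 := by
    have := hρv.1.2
    rwa [hFeq] at this
  -- F(1) = ∑ c < ∑ b = 0
  obtain ⟨k, hk⟩ := hS
  have hck : c k < b k := by
    simp only [hc, dif_pos hk]
    nlinarith [(hv (⟨k, hk⟩ : S)).2, hbS k hk]
  have hF1 : ∑' j, c j < 0 := by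
    calc ∑' j, c j < ∑' j, b j := Summable.tsum_lt_tsum hcle hck hcs hb_sum
    _ = 0 := hb_total
  -- ρv < 1
  have hρlt : ρv < 1 := by
    rcases lt_or_eq_of_le hρ1 with h | h
    · exact h
    · exfalso
      rw [h] at hFρ
      simp only [one_pow, mul_one] at hFρ
      linarith
  -- rewrite the terms of the goal sums
  have hteq : (fun j : ℕ => if h : j ∈ S then (j : ℝ) * b j * v ⟨j, h⟩ * ρv ^ (j - 1)
       else (j : ℝ) * b j * ρv ^ (j - 1))
      = fun j : ℕ => (j : ℝ) * c j * ρv ^ (j - 1) := by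
    funext j
    simp only [hc]
    split <;> ring
  -- bound |c j| by a constant
  set C : ℝ := ∑' j, |c j| with hC
  have hCb : ∀ j, |c j| ≤ C := fun j =>
    hcs.abs.le_tsum j (fun i _ => abs_nonneg _)
  have hC0 : 0 ≤ C := le_trans (abs_nonneg _) (hCb 0)
  have hgeo : Summable (fun j : ℕ => (j : ℝ) * ρv ^ (j - 1)) := by
    rw [← summable_nat_add_iff 1]
    have h1 : Summable (fun n : ℕ => (n : ℝ) * ρv ^ n) := by
      have := summable_pow_mul_geometric_of_norm_lt_one (R := ℝ) 1
        (by rw [Real.norm_eq_abs, abs_of_nonneg hρ0]; exact hρlt)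
      simpa using this
    have h2 : Summable (fun n : ℕ => ρv ^ n) :=
      summable_geometric_of_lt_one hρ0 hρlt
    have := h1.add h2
    apply this.congr
    intro n
    push_cast
    ring_nf
  have hsumm : Summable (fun j : ℕ => |(j : ℝ) * c j * ρv ^ (j - 1)|) := by
    apply Summable.of_norm_bounded (hgeo.mul_left C)
    intro j
    rw [Real.norm_eq_abs, abs_abs, abs_mul, abs_mul]
    have h1 : |(j:ℝ)| = (j:ℝ) := abs_of_nonneg (by positivity)
    have h2 : |ρv ^ (j-1)| = ρv ^ (j-1) := abs_of_nonneg (by positivity)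
    rw [h1, h2]
    have hp : (0:ℝ) ≤ ρv ^ (j-1) := by positivity
    have h3 : (j:ℝ) * |c j| ≤ (j:ℝ) * C :=
      mul_le_mul_of_nonneg_left (hCb j) (Nat.cast_nonneg j)
    have h4 := mul_le_mul_of_nonneg_right h3 hp
    linarith [h4, (by ring : (j:ℝ) * C * ρv ^ (j-1) = C * ((j:ℝ) * ρv ^ (j-1)))]
  have hgoal2 : Summable (fun j : ℕ =>
      |if h : j ∈ S then (j : ℝ) * b j * v ⟨j, h⟩ * ρv ^ (j - 1)
       else (j : ℝ) * b j * ρv ^ (j - 1)|) :=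
    hsumm.congr fun j => (congrArg abs (congrFun hteq j)).symm
  -- the derivative bound
  have htsum_eq : (∑' j : ℕ, if h : j ∈ S then (j : ℝ) * b j * v ⟨j, h⟩ * ρv ^ (j - 1)
       else (j : ℝ) * b j * ρv ^ (j - 1)) = ∑' j : ℕ, (j : ℝ) * c j * ρv ^ (j - 1) :=
    tsum_congr fun j => congrFun hteq j
  set t : ℕ → ℝ := fun j => (j : ℝ) * c j * ρv ^ (j - 1) with ht
  have hts : Summable t := hsumm.of_abs
  have hcρ : Summable (fun j => c j * ρv ^ j) := by
    apply Summable.of_norm_bounded hcs.abs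
    intro j
    rw [Real.norm_eq_abs, abs_mul]
    have : |ρv ^ j| ≤ 1 := by
      rw [abs_of_nonneg (by positivity)]
      exact pow_le_one₀ hρ0 hρ1
    nlinarith [abs_nonneg (c j)]
  have hkey : ∀ j, (1 - ρv) * t j ≤ c j - c j * ρv ^ j := by
    intro j
    by_cases hj : j = 1
    · subst hj
      exact le_of_eq (by simp only [ht, Nat.cast_one]; ring)
    · have hcj : 0 ≤ c j := by
        simp only [hc]
        split
        · rename_i h
          exact mul_nonneg (hbS j h).le (hv _).1
        · exact hb_nonneg j hj
      have := geom_ineq ρv hρ0 hρ1 j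
      have := mul_le_mul_of_nonneg_left this hcj
      simp only [ht]
      nlinarith
  have hmain : (1 - ρv) * ∑' j, t j ≤ ∑' j, c j := by
    rw [← tsum_mul_left]
    calc ∑' j, (1 - ρv) * t j ≤ ∑' j, (c j - c j * ρv ^ j) :=
          (hts.mul_left _).tsum_le_tsum hkey (hcs.sub hcρ)
      _ = (∑' j, c j) - ∑' j, c j * ρv ^ j := hcs.tsum_sub hcρ
      _ = ∑' j, c j := by rw [hFρ]; ring
  refine ⟨hρlt, hgoal2, ?_⟩
  rw [htsum_eq]
  nlinarith [hmain, hF1, hρlt]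
end

section
/- The function v ↦ ρ(v) is infinitely differentiable (of class C^∞, in the sense of ContDiffOn with smoothness order ∞) on the set {v : v_k ∈ [0,1) for all k ∈ S}, viewed as a subset of ℝ^S. -/
open Set Filter
open scoped ENNReal NNReal

namespace Stmt5Aux

variable (b : ℕ → ℝ) (S : Finset ℕ)

noncomputable def cf (v : S → ℝ) (j : ℕ) : ℝ := if h : j ∈ S then b j * v ⟨j, h⟩ else b j

noncomputable def Fv (v : S → ℝ) (u : ℝ) : ℝ := ∑' j, cf b S v j * u ^ j

variable {b S}

lemma cf_abs_le {v : S → ℝ} (hv : ∀ k, v k ∈ Set.Icc (0:ℝ) 1) (j : ℕ) :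
    |cf b S v j| ≤ |b j| := by
  unfold cf
  split
  · rename_i h
    rw [abs_mul]
    have h0 := (hv ⟨j, h⟩).1
    have h1 := (hv ⟨j, h⟩).2
    calc |b j| * |v ⟨j, h⟩| ≤ |b j| * 1 := by
          apply mul_le_mul_of_nonneg_left _ (abs_nonneg _)
          rw [abs_of_nonneg h0]; exact h1
      _ = |b j| := mul_one _
  · exact le_refl _

lemma summable_cf (hb : Summable b) {v : S → ℝ} (hv : ∀ k, v k ∈ Set.Icc (0:ℝ) 1)
    {u : ℝ} (hu : |u| ≤ 1) : Summable (fun j => cf b S v j * u ^ j) := by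
  apply Summable.of_norm_bounded (g := fun j => |b j|) (summable_abs_iff.mpr hb)
  intro j
  rw [Real.norm_eq_abs, abs_mul, abs_pow]
  calc |cf b S v j| * |u| ^ j ≤ |b j| * 1 := by
        apply mul_le_mul (cf_abs_le hv j) (pow_le_one₀ (abs_nonneg u) hu)
          (pow_nonneg (abs_nonneg u) j) (abs_nonneg _)
    _ = |b j| := mul_one _

lemma cf_nonneg (hb_nonneg : ∀ j, j ≠ 1 → 0 ≤ b j) {v : S → ℝ}
    (hv : ∀ k, 0 ≤ v k) {j : ℕ} (hj : j ≠ 1) : 0 ≤ cf b S v j := by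
  unfold cf
  split
  · exact mul_nonneg (hb_nonneg j hj) (hv _)
  · exact hb_nonneg j hj

lemma cf_le (hb_nonneg : ∀ j, j ≠ 1 → 0 ≤ b j) (hS1 : 1 ∉ S) {v : S → ℝ}
    (hv : ∀ k, v k ∈ Set.Icc (0:ℝ) 1) (j : ℕ) : cf b S v j ≤ b j := by
  unfold cf
  split
  · rename_i h
    have hj1 : j ≠ 1 := fun hj => hS1 (hj ▸ h)
    calc b j * v ⟨j, h⟩ ≤ b j * 1 :=
          mul_le_mul_of_nonneg_left (hv ⟨j, h⟩).2 (hb_nonneg j hj1)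
      _ = b j := mul_one _
  · exact le_refl _

lemma cf_one (hS1 : 1 ∉ S) (v : S → ℝ) : cf b S v 1 = b 1 := by
  unfold cf
  rw [dif_neg hS1]

lemma Fv_one (v : S → ℝ) : Fv b S v 1 = ∑' j, cf b S v j := by
  unfold Fv
  exact tsum_congr fun j => by rw [one_pow, mul_one]

lemma Fv_one_nonpos (hb_nonneg : ∀ j, j ≠ 1 → 0 ≤ b j) (hS1 : 1 ∉ S)
    (hb : Summable b) (hb_total : ∑' j, b j = 0) {v : S → ℝ}
    (hv : ∀ k, v k ∈ Set.Icc (0:ℝ) 1) : Fv b S v 1 ≤ 0 := by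
  rw [Fv_one]
  calc (∑' j, cf b S v j) ≤ ∑' j, b j := by
        apply Summable.tsum_le_tsum (cf_le hb_nonneg hS1 hv) _ hb
        · have := summable_cf hb hv (u := 1) (by norm_num)
          simpa using this
    _ = 0 := hb_total

lemma Fv_one_neg (hb_nonneg : ∀ j, j ≠ 1 → 0 ≤ b j) (hS1 : 1 ∉ S) (hS : S.Nonempty)
    (hbS : ∀ k ∈ S, 0 < b k)
    (hb : Summable b) (hb_total : ∑' j, b j = 0) {v : S → ℝ}
    (hv : ∀ k, v k ∈ Set.Ico (0:ℝ) 1) : Fv b S v 1 < 0 := by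
  have hvIcc : ∀ k, v k ∈ Set.Icc (0:ℝ) 1 := fun k => ⟨(hv k).1, le_of_lt (hv k).2⟩
  set e : ℕ → ℝ := fun j => if h : j ∈ S then b j * (1 - v ⟨j, h⟩) else 0 with he
  have hsum_e : Summable e := summable_of_ne_finset_zero (s := S) (fun j hj => dif_neg hj)
  have hce : ∀ j, cf b S v j = b j - e j := by
    intro j
    unfold cf
    simp only [he]
    by_cases h : j ∈ S
    · rw [dif_pos h, dif_pos h]; ring
    · rw [dif_neg h, dif_neg h]; ring
  have htsum_e : ∑' j, e j = ∑ j ∈ S, e j := tsum_eq_sum (fun j hj => dif_neg hj)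
  have hpos : 0 < ∑ j ∈ S, e j := by
    apply Finset.sum_pos _ hS
    intro j hj
    simp only [he, dif_pos hj]
    exact mul_pos (hbS j hj) (by linarith [(hv ⟨j, hj⟩).2])
  rw [Fv_one]
  calc (∑' j, cf b S v j) = ∑' j, (b j - e j) := tsum_congr hce
    _ = (∑' j, b j) - ∑' j, e j := Summable.tsum_sub hb hsum_e
    _ = -(∑ j ∈ S, e j) := by rw [hb_total, htsum_e]; ring
    _ < 0 := by linarith


lemma Fv_zero (v : S → ℝ) : Fv b S v 0 = cf b S v 0 := by
  unfold Fv
  rw [tsum_eq_single 0 (fun j hj => by rw [zero_pow hj, mul_zero])]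
  rw [pow_zero, mul_one]

lemma convex_bound (hb_nonneg : ∀ j, j ≠ 1 → 0 ≤ b j) (hb : Summable b)
    {v : S → ℝ} (hv : ∀ k, v k ∈ Set.Icc (0:ℝ) 1) {r t : ℝ}
    (h0r : 0 ≤ r) (hrt : r < t) (ht1 : t < 1) :
    Fv b S v t ≤ (1 - t) / (1 - r) * Fv b S v r + (t - r) / (1 - r) * Fv b S v 1 := by
  have h1r : (0:ℝ) < 1 - r := by linarith
  set a := (1 - t) / (1 - r) with ha_def
  set β := (t - r) / (1 - r) with hβ_def
  have ha : 0 ≤ a := div_nonneg (by linarith) (le_of_lt h1r)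
  have hβ : 0 ≤ β := div_nonneg (by linarith) (le_of_lt h1r)
  have hab : a + β = 1 := by rw [ha_def, hβ_def]; field_simp; ring
  have hconv : a * r + β * 1 = t := by rw [ha_def, hβ_def]; field_simp; ring
  have habs_r : |r| ≤ 1 := abs_le.mpr ⟨by linarith, by linarith⟩
  have habs_t : |t| ≤ 1 := abs_le.mpr ⟨by linarith, by linarith⟩
  have habs_1 : |(1:ℝ)| ≤ 1 := by norm_num
  have hsum_t := summable_cf hb hv habs_t
  have hsum_r := summable_cf hb hv habs_r
  have hsum_1 := summable_cf hb hv habs_1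
  have hterm : ∀ j, cf b S v j * t ^ j ≤
      a * (cf b S v j * r ^ j) + β * (cf b S v j * 1 ^ j) := by
    intro j
    by_cases hj : j = 1
    · subst hj
      simp only [pow_one]
      rw [← hconv]; ring_nf; exact le_refl _
    · have hcf : 0 ≤ cf b S v j := cf_nonneg hb_nonneg (fun k => (hv k).1) hj
      have hpow := (convexOn_pow j).2 (mem_Ici.mpr h0r) (mem_Ici.mpr zero_le_one) ha hβ hab
      simp only [smul_eq_mul] at hpow
      rw [hconv] at hpow
      calc cf b S v j * t ^ j ≤ cf b S v j * (a * r ^ j + β * 1 ^ j) :=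
            mul_le_mul_of_nonneg_left hpow hcf
        _ = a * (cf b S v j * r ^ j) + β * (cf b S v j * 1 ^ j) := by ring
  calc Fv b S v t ≤ ∑' j, (a * (cf b S v j * r ^ j) + β * (cf b S v j * 1 ^ j)) := by
        apply Summable.tsum_le_tsum hterm hsum_t
        exact (hsum_r.mul_left a).add (hsum_1.mul_left β)
    _ = a * Fv b S v r + β * Fv b S v 1 := by
        rw [Summable.tsum_add (hsum_r.mul_left a) (hsum_1.mul_left β), tsum_mul_left, tsum_mul_left]
        rfl

lemma root_bound (hb_nonneg : ∀ j, j ≠ 1 → 0 ≤ b j) (hb : Summable b)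
    {v : S → ℝ} (hv : ∀ k, v k ∈ Set.Icc (0:ℝ) 1) {r t : ℝ}
    (h0r : 0 ≤ r) (hrt : r < t) (ht1 : t < 1) (hFr : Fv b S v r = 0) :
    Fv b S v t ≤ (t - r) / (1 - r) * Fv b S v 1 := by
  have := convex_bound hb_nonneg hb hv h0r hrt ht1
  rw [hFr, mul_zero, zero_add] at this
  exact this

set_option maxHeartbeats 1000000 in
lemma Fv_pos_of_neg (hb_nonneg : ∀ j, j ≠ 1 → 0 ≤ b j) (hb1 : b 1 < 0) (hS1 : 1 ∉ S)
    (hb : Summable b) (hb_total : ∑' j, b j = 0)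
    {v : S → ℝ} (hv : ∀ k, v k ∈ Set.Icc (0:ℝ) 1) {u : ℝ}
    (hu1 : -1 < u) (hu0 : u < 0) : 0 < Fv b S v u := by
  have habs : |u| ≤ 1 := abs_le.mpr ⟨le_of_lt hu1, by linarith⟩
  have hsum := summable_cf hb hv habs
  have hsum1 := summable_cf hb hv (u := 1) (by norm_num)
  have hsumc : Summable (fun j => cf b S v j) := by simpa using hsum1
  have hc0 : 0 ≤ cf b S v 0 := cf_nonneg hb_nonneg (fun k => (hv k).1) (by norm_num)
  have hc1 : cf b S v 1 = b 1 := cf_one hS1 v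
  -- tail sums
  have htail_sum : Summable (fun i => cf b S v (i + 2)) :=
    (summable_nat_add_iff 2).mpr hsumc
  have htail_sumu : Summable (fun i => cf b S v (i + 2) * u ^ (i + 2)) :=
    (summable_nat_add_iff 2).mpr hsum
  have hsplit := Summable.sum_add_tsum_nat_add (f := fun j => cf b S v j * u ^ j) 2 hsum
  have hsplit1 := Summable.sum_add_tsum_nat_add (f := fun j => cf b S v j) 2 hsumc
  have hrange : ∑ i ∈ Finset.range 2, cf b S v i * u ^ i
      = cf b S v 0 + cf b S v 1 * u := by
    simp [Finset.sum_range_succ]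
  have hrange1 : ∑ i ∈ Finset.range 2, cf b S v i = cf b S v 0 + cf b S v 1 := by
    simp [Finset.sum_range_succ]
  have hFv1 : Fv b S v 1 ≤ 0 := Fv_one_nonpos hb_nonneg hS1 hb hb_total hv
  have hFv1' : (∑' j, cf b S v j) ≤ 0 := by rwa [Fv_one] at hFv1
  have hTail1 : (∑' i, cf b S v (i + 2)) ≤ -(cf b S v 0) - cf b S v 1 := by
    rw [hrange1] at hsplit1; linarith
  -- termwise lower bound for the tail at u
  have hterm : ∀ i, -(cf b S v (i + 2) * u ^ 2) ≤ cf b S v (i + 2) * u ^ (i + 2) := by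
    intro i
    have hcf : 0 ≤ cf b S v (i + 2) := cf_nonneg hb_nonneg (fun k => (hv k).1) (by omega)
    have h1 : |cf b S v (i + 2) * u ^ (i + 2)| ≤ cf b S v (i + 2) * u ^ 2 := by
      rw [abs_mul, abs_pow, abs_of_nonneg hcf]
      apply mul_le_mul_of_nonneg_left _ hcf
      calc |u| ^ (i + 2) ≤ |u| ^ 2 := pow_le_pow_of_le_one (abs_nonneg u) habs (by omega)
        _ = u ^ 2 := sq_abs u
    linarith [neg_abs_le (cf b S v (i + 2) * u ^ (i + 2))]
  have hT : -((∑' i, cf b S v (i + 2)) * u ^ 2) ≤ ∑' i, cf b S v (i + 2) * u ^ (i + 2) := by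
    have := Summable.tsum_le_tsum hterm ((htail_sum.mul_right (u ^ 2)).neg) htail_sumu
    calc -((∑' i, cf b S v (i + 2)) * u ^ 2)
        = ∑' i, -(cf b S v (i + 2) * u ^ 2) := by rw [tsum_neg, tsum_mul_right]
      _ ≤ _ := this
  have hq : 0 < u ^ 2 := by nlinarith
  have hFveq : Fv b S v u = cf b S v 0 + cf b S v 1 * u
      + ∑' i, cf b S v (i + 2) * u ^ (i + 2) := by
    rw [hrange] at hsplit
    unfold Fv
    linarith [hsplit]
  rw [hFveq, hc1]
  have key : -((∑' i, cf b S v (i + 2)) * u ^ 2) ≥ (cf b S v 0 + b 1) * u ^ 2 := by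
    rw [hc1] at hTail1
    nlinarith [hTail1, hq]
  nlinarith [hT, key, hc0, mul_pos_of_neg_of_neg hb1 (show u + u ^ 2 < 0 by nlinarith),
    mul_nonneg hc0 (sq_nonneg u)]


variable (b S) in
noncomputable def acoef (j : ℕ) : ℝ := if j ∈ S then 0 else b j

variable (b S) in
noncomputable def fdef : ((S → ℝ) × ℝ) → ℝ := fun p =>
  FormalMultilinearSeries.ofScalarsSum (E := ℝ) (acoef b S) p.2
    + ∑ k ∈ S.attach, b k * p.1 k * p.2 ^ (k : ℕ)

lemma summable_acoef (hb : Summable b) {u : ℝ} (hu : |u| ≤ 1) :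
    Summable (fun j => acoef b S j * u ^ j) := by
  apply Summable.of_norm_bounded (g := fun j => |b j|) (summable_abs_iff.mpr hb)
  intro j
  rw [Real.norm_eq_abs, abs_mul, abs_pow]
  have h1 : |acoef b S j| ≤ |b j| := by
    unfold acoef; split
    · simp [abs_nonneg]
    · exact le_refl _
  calc |acoef b S j| * |u| ^ j ≤ |b j| * 1 :=
        mul_le_mul h1 (pow_le_one₀ (abs_nonneg u) hu) (pow_nonneg (abs_nonneg u) j) (abs_nonneg _)
    _ = |b j| := mul_one _

lemma fdef_eq (hb : Summable b) {v : S → ℝ} (hv : ∀ k, v k ∈ Set.Icc (0:ℝ) 1)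
    {u : ℝ} (hu : |u| ≤ 1) : fdef b S (v, u) = Fv b S v u := by
  classical
  set s : ℕ → ℝ := fun j => if h : j ∈ S then b j * v ⟨j, h⟩ * u ^ j else 0 with hs
  have hsum_a := summable_acoef (S := S) hb hu
  have hsum_s : Summable s := summable_of_ne_finset_zero (s := S) (fun j hj => dif_neg hj)
  have hpt : ∀ j, cf b S v j * u ^ j = acoef b S j * u ^ j + s j := by
    intro j
    simp only [hs]
    unfold cf acoef
    by_cases h : j ∈ S
    · rw [dif_pos h, if_pos h, dif_pos h]; ring
    · rw [dif_neg h, if_neg h, dif_neg h]; ring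
  have hofs : FormalMultilinearSeries.ofScalarsSum (E := ℝ) (acoef b S) u
      = ∑' j, acoef b S j * u ^ j := by
    rw [FormalMultilinearSeries.ofScalars_sum_eq]
    exact tsum_congr fun j => by rw [smul_eq_mul]
  have hss : (∑' j, s j) = ∑ k ∈ S.attach, b k * v k * u ^ (k : ℕ) := by
    rw [tsum_eq_sum (s := S) (fun j hj => dif_neg hj), ← Finset.sum_attach S s]
    apply Finset.sum_congr rfl
    intro k _
    rw [hs]
    simp only [Subtype.coe_eta]
    exact dif_pos k.coe_prop
  unfold Fv fdef
  rw [tsum_congr hpt, Summable.tsum_add hsum_a hsum_s, hofs, hss]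

lemma contDiffAt_fdef (hb : Summable b) {v₀ : S → ℝ} {u₀ : ℝ} (hu₀ : |u₀| < 1) :
    ContDiffAt ℝ (⊤ : ℕ∞) (fdef b S) (v₀, u₀) := by
  set p := FormalMultilinearSeries.ofScalars ℝ (acoef b S) with hp
  have hrad : (1 : ℝ≥0∞) ≤ p.radius := by
    have : Summable (fun n => ‖p n‖ * ((1 : NNReal) : ℝ) ^ n) := by
      simp only [hp, FormalMultilinearSeries.ofScalars_norm, NNReal.coe_one, one_pow, mul_one]
      apply Summable.of_norm_bounded (g := fun j => |b j|) (summable_abs_iff.mpr hb)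
      intro j
      simp only [Real.norm_eq_abs, abs_abs]
      unfold acoef; split
      · simp [abs_nonneg]
      · exact le_refl _
    simpa using p.le_radius_of_summable_norm this
  have hrad0 : (0 : ℝ≥0∞) < p.radius := lt_of_lt_of_le (by norm_num) hrad
  have hball := p.hasFPowerSeriesOnBall hrad0
  have hmem : u₀ ∈ Metric.eball (0 : ℝ) p.radius := by
    rw [Metric.mem_eball, edist_dist]
    apply lt_of_lt_of_le _ hrad
    rw [Real.dist_eq, sub_zero]
    exact_mod_cast ENNReal.ofReal_lt_one.mpr hu₀
  have hanal : AnalyticAt ℝ p.sum u₀ := hball.analyticOnNhd u₀ (by simpa using hmem)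
  have hA : ContDiffAt ℝ (⊤ : ℕ∞) p.sum u₀ := hanal.contDiffAt
  have h1 : ContDiffAt ℝ (⊤ : ℕ∞)
      (fun q : (S → ℝ) × ℝ => FormalMultilinearSeries.ofScalarsSum (E := ℝ) (acoef b S) q.2)
      (v₀, u₀) := hA.comp _ contDiffAt_snd
  have h2 : ContDiff ℝ (⊤ : ℕ∞)
      (fun q : (S → ℝ) × ℝ => ∑ k ∈ S.attach, b k * q.1 k * q.2 ^ (k : ℕ)) := by
    apply ContDiff.sum
    intro k _
    have hproj : ContDiff ℝ (⊤ : ℕ∞) (fun q : (S → ℝ) × ℝ => q.1 k) :=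
      (ContinuousLinearMap.proj (R := ℝ) (φ := fun _ : S => ℝ) k).contDiff.comp contDiff_fst
    exact (contDiff_const.mul hproj).mul (contDiff_snd.pow _)
  exact h1.add h2.contDiffAt


lemma deriv_neg (hb_nonneg : ∀ j, j ≠ 1 → 0 ≤ b j) (hS1 : 1 ∉ S) (hS : S.Nonempty)
    (hbS : ∀ k ∈ S, 0 < b k) (hb : Summable b) (hb_total : ∑' j, b j = 0)
    {v₀ : S → ℝ} (hv₀ : ∀ k, v₀ k ∈ Set.Ico (0:ℝ) 1) {ρ₀ : ℝ}
    (h0 : 0 ≤ ρ₀) (hρlt : ρ₀ < 1) (hroot : Fv b S v₀ ρ₀ = 0)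
    {m : ℝ} (hder : HasDerivAt (fun u => fdef b S (v₀, u)) m ρ₀) : m < 0 := by
  have hvIcc : ∀ k, v₀ k ∈ Set.Icc (0:ℝ) 1 := fun k => ⟨(hv₀ k).1, le_of_lt (hv₀ k).2⟩
  have hF1 : Fv b S v₀ 1 < 0 := Fv_one_neg hb_nonneg hS1 hS hbS hb hb_total hv₀
  set κ := Fv b S v₀ 1 / (1 - ρ₀) with hκ
  have hκneg : κ < 0 := div_neg_of_neg_of_pos hF1 (by linarith)
  have hfd0 : fdef b S (v₀, ρ₀) = 0 := by
    rw [fdef_eq hb hvIcc (abs_le.mpr ⟨by linarith, le_of_lt hρlt⟩)]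
    exact hroot
  have hslope : ∀ u ∈ Ioo ρ₀ 1, slope (fun u => fdef b S (v₀, u)) ρ₀ u ≤ κ := by
    intro u hu
    have huρ : 0 < u - ρ₀ := by linarith [hu.1]
    have hfu : fdef b S (v₀, u) = Fv b S v₀ u :=
      fdef_eq hb hvIcc (abs_le.mpr ⟨by linarith [hu.1], le_of_lt hu.2⟩)
    have hb1 : Fv b S v₀ u ≤ (u - ρ₀) / (1 - ρ₀) * Fv b S v₀ 1 :=
      root_bound hb_nonneg hb hvIcc h0 hu.1 hu.2 hroot
    have h1ρ : (0:ℝ) < 1 - ρ₀ := by linarith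
    rw [slope_def_field, hfd0, sub_zero, hfu, hκ, div_le_div_iff₀ huρ h1ρ]
    have hdiv : (u - ρ₀) / (1 - ρ₀) * Fv b S v₀ 1 * (1 - ρ₀) = Fv b S v₀ 1 * (u - ρ₀) := by
      field_simp
    have hmul := mul_le_mul_of_nonneg_right hb1 (le_of_lt h1ρ)
    linarith [hmul, hdiv]
  have hwithin := (hder.hasDerivWithinAt (s := Ioi ρ₀))
  rw [hasDerivWithinAt_iff_tendsto_slope] at hwithin
  have hdiff : Ioi ρ₀ \ {ρ₀} = Ioi ρ₀ := Set.diff_singleton_eq_self (notMem_Ioi.mpr le_rfl)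
  rw [hdiff] at hwithin
  have hev : ∀ᶠ u in nhdsWithin ρ₀ (Ioi ρ₀), slope (fun u => fdef b S (v₀, u)) ρ₀ u ≤ κ := by
    filter_upwards [Ioo_mem_nhdsGT_of_mem (Set.mem_Ico.mpr ⟨le_refl ρ₀, hρlt⟩)] with u hu
    exact hslope u hu
  have hmκ : m ≤ κ := le_of_tendsto hwithin hev
  linarith

lemma implicit (hb : Summable b) {v₀ : S → ℝ} {ρ₀ : ℝ} (hu₀ : |ρ₀| < 1)
    {m : ℝ} (hder : HasDerivAt (fun u => fdef b S (v₀, u)) m ρ₀) (hm : m ≠ 0) :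
    ∃ g : (S → ℝ) → ℝ, ContDiffAt ℝ (⊤ : ℕ∞) g v₀ ∧ g v₀ = ρ₀ ∧
      ∀ᶠ v in nhds v₀, fdef b S (v, g v) = fdef b S (v₀, ρ₀) := by
  classical
  set p₀ : (S → ℝ) × ℝ := (v₀, ρ₀) with hp₀
  have hfd : ContDiffAt ℝ (⊤ : ℕ∞) (fdef b S) p₀ := contDiffAt_fdef hb hu₀
  have hn : ((⊤ : ℕ∞) : WithTop ℕ∞) ≠ 0 := by simp
  have hdiff : DifferentiableAt ℝ (fdef b S) p₀ := hfd.differentiableAt hn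
  set Df := fderiv ℝ (fdef b S) p₀ with hDf_def
  have hDf : HasFDerivAt (fdef b S) Df p₀ := hdiff.hasFDerivAt
  have hpair : HasDerivAt (fun u : ℝ => ((v₀, u) : (S → ℝ) × ℝ)) ((0 : S → ℝ), (1 : ℝ)) ρ₀ :=
    (hasDerivAt_const ρ₀ v₀).prodMk (hasDerivAt_id ρ₀)
  have hcomp : HasDerivAt (fun u => fdef b S (v₀, u)) (Df ((0 : S → ℝ), (1 : ℝ))) ρ₀ :=
    hDf.comp_hasDerivAt ρ₀ hpair
  have hm' : Df ((0 : S → ℝ), (1 : ℝ)) ≠ 0 := by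
    rw [← hder.unique hcomp]; exact hm
  set G : (S → ℝ) × ℝ → (S → ℝ) × ℝ := fun q => (q.1, fdef b S q) with hG_def
  set DG : ((S → ℝ) × ℝ) →L[ℝ] ((S → ℝ) × ℝ) :=
    (ContinuousLinearMap.fst ℝ (S → ℝ) ℝ).prod Df with hDG_def
  have hDG : HasFDerivAt G DG p₀ :=
    ((ContinuousLinearMap.fst ℝ (S → ℝ) ℝ).hasFDerivAt).prodMk hDf
  have hker : ∀ z : (S → ℝ) × ℝ, DG z = 0 → z = 0 := by
    intro z hz
    have h1 : z.1 = 0 ∧ Df z = 0 := by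
      have := Prod.ext_iff.mp hz
      simpa [hDG_def] using this
    have hz1 : z = z.2 • ((0 : S → ℝ), (1 : ℝ)) := by
      have : z = (z.1, z.2) := rfl
      rw [this, h1.1, Prod.smul_mk, smul_zero, smul_eq_mul, mul_one]
    have h2 : Df z = z.2 * Df ((0 : S → ℝ), (1 : ℝ)) := by
      conv_lhs => rw [hz1]
      rw [map_smul, smul_eq_mul]
    have hz2 : z.2 = 0 := by
      rcases mul_eq_zero.mp (h2 ▸ h1.2) with h | h
      · exact h
      · exact absurd h hm'
    rw [hz1, hz2, zero_smul]
  have hker' : LinearMap.ker DG.toLinearMap = ⊥ :=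
    LinearMap.ker_eq_bot'.mpr (fun z hz => hker z hz)
  have hinj : Function.Injective DG := LinearMap.ker_eq_bot.mp hker'
  have hsurj : Function.Surjective DG := (LinearMap.injective_iff_surjective
    (f := DG.toLinearMap)).mp hinj
  set DGe : ((S → ℝ) × ℝ) ≃L[ℝ] ((S → ℝ) × ℝ) :=
    LinearEquiv.toContinuousLinearEquiv (LinearEquiv.ofBijective DG.toLinearMap ⟨hinj, hsurj⟩)
    with hDGe_def
  have hcoe : (DGe : ((S → ℝ) × ℝ) →L[ℝ] ((S → ℝ) × ℝ)) = DG := by ext z <;> rfl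
  have hGcd : ContDiffAt ℝ (⊤ : ℕ∞) G p₀ := (contDiffAt_fst (p := p₀)).prodMk hfd
  have hG' : HasFDerivAt G (DGe : ((S → ℝ) × ℝ) →L[ℝ] ((S → ℝ) × ℝ)) p₀ := by
    rw [hcoe]; exact hDG
  set H := hGcd.localInverse hG' hn with hH_def
  have hH : ContDiffAt ℝ (⊤ : ℕ∞) H (G p₀) := hGcd.to_localInverse hG' hn
  have hHp : H (G p₀) = p₀ := hGcd.localInverse_apply_image hG' hn
  have hstrict := hGcd.hasStrictFDerivAt' hG' hn
  have hrightinv : ∀ᶠ q in nhds (G p₀), G (H q) = q := hstrict.eventually_right_inverse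
  set c₀ := fdef b S p₀ with hc₀
  have hGp₀ : G p₀ = (v₀, c₀) := rfl
  refine ⟨fun v => (H (v, c₀)).2, ?_, ?_, ?_⟩
  · have hinner : ContDiffAt ℝ (⊤ : ℕ∞) (fun v : S → ℝ => ((v, c₀) : (S → ℝ) × ℝ)) v₀ :=
      (contDiffAt_id).prodMk contDiffAt_const
    have hHat : ContDiffAt ℝ (⊤ : ℕ∞) H (v₀, c₀) := by rw [← hGp₀]; exact hH
    exact contDiffAt_snd.comp v₀ (hHat.comp v₀ hinner)
  · show (H (v₀, c₀)).2 = ρ₀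
    rw [← hGp₀, hHp]
  · have htend : Tendsto (fun v : S → ℝ => ((v, c₀) : (S → ℝ) × ℝ)) (nhds v₀) (nhds (G p₀)) := by
      rw [hGp₀]
      exact (continuous_id.prodMk continuous_const).continuousAt
    filter_upwards [htend.eventually hrightinv] with v hv
    have h1 : (H (v, c₀)).1 = v := congrArg Prod.fst hv
    have h2 : fdef b S (H (v, c₀)) = c₀ := congrArg Prod.snd hv
    have h3 : ((v, (H (v, c₀)).2) : (S → ℝ) × ℝ) = H (v, c₀) :=
      Prod.ext_iff.mpr ⟨h1.symm, rfl⟩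
    rw [h3, h2]

end Stmt5Aux


theorem stmt_5 (b : ℕ → ℝ)
    (hb_nonneg : ∀ j, j ≠ 1 → 0 ≤ b j) (hb1 : b 1 < 0)
    (hb_sum : Summable b) (hb_total : ∑' j, b j = 0)
    (S : Finset ℕ) (hS : S.Nonempty) (hS1 : 1 ∉ S)
    (hbS : ∀ k ∈ S, 0 < b k)
    (ρfun : (S → ℝ) → ℝ)
    (hρfun : ∀ v : S → ℝ, (∀ k, v k ∈ Set.Icc (0:ℝ) 1) →
      IsLeast {u ∈ Set.Icc (0:ℝ) 1 |
        (∑' j : ℕ, if h : j ∈ S then b j * v ⟨j, h⟩ * u ^ j else b j * u ^ j) = 0} (ρfun v)) :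
    ContDiffOn ℝ (⊤ : ℕ∞) ρfun {v : S → ℝ | ∀ k, v k ∈ Set.Ico (0:ℝ) 1} := by
  classical
  have hset : ∀ (v : S → ℝ) (u : ℝ),
      (∑' j : ℕ, if h : j ∈ S then b j * v ⟨j, h⟩ * u ^ j else b j * u ^ j)
        = Stmt5Aux.Fv b S v u := by
    intro v u
    unfold Stmt5Aux.Fv Stmt5Aux.cf
    apply tsum_congr
    intro j
    by_cases h : j ∈ S
    · rw [dif_pos h, dif_pos h]
    · rw [dif_neg h, dif_neg h]
  intro v₀ hv₀
  have hv₀' : ∀ k, v₀ k ∈ Set.Ico (0:ℝ) 1 := hv₀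
  have hv₀Icc : ∀ k, v₀ k ∈ Set.Icc (0:ℝ) 1 := fun k => ⟨(hv₀' k).1, le_of_lt (hv₀' k).2⟩
  obtain ⟨⟨hmem, hroot'⟩, hlb⟩ := hρfun v₀ hv₀Icc
  rw [hset] at hroot'
  have hF1 : Stmt5Aux.Fv b S v₀ 1 < 0 :=
    Stmt5Aux.Fv_one_neg hb_nonneg hS1 hS hbS hb_sum hb_total hv₀'
  have hρ1 : ρfun v₀ < 1 := by
    rcases lt_or_eq_of_le hmem.2 with h | h
    · exact h
    · rw [h] at hroot'; linarith
  have habs : |ρfun v₀| < 1 := abs_lt.mpr ⟨by linarith [hmem.1], hρ1⟩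
  have hfd := Stmt5Aux.contDiffAt_fdef (S := S) (v₀ := v₀) hb_sum habs
  have hn1 : ((⊤ : ℕ∞) : WithTop ℕ∞) ≠ 0 := by simp
  have hdiff := hfd.differentiableAt hn1
  have hDf := hdiff.hasFDerivAt
  have hpair : HasDerivAt (fun u : ℝ => ((v₀, u) : (S → ℝ) × ℝ)) ((0 : S → ℝ), (1 : ℝ))
      (ρfun v₀) := (hasDerivAt_const (ρfun v₀) v₀).prodMk (hasDerivAt_id (ρfun v₀))
  have hder : HasDerivAt (fun u => Stmt5Aux.fdef b S (v₀, u))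
      ((fderiv ℝ (Stmt5Aux.fdef b S) (v₀, ρfun v₀)) ((0 : S → ℝ), (1 : ℝ))) (ρfun v₀) :=
    hDf.comp_hasDerivAt _ hpair
  have hmneg := Stmt5Aux.deriv_neg hb_nonneg hS1 hS hbS hb_sum hb_total hv₀'
    hmem.1 hρ1 hroot' hder
  obtain ⟨g, hg, hgv₀, hev⟩ := Stmt5Aux.implicit hb_sum habs hder (ne_of_lt hmneg)
  have hfd0 : Stmt5Aux.fdef b S (v₀, ρfun v₀) = 0 := by
    rw [Stmt5Aux.fdef_eq hb_sum hv₀Icc (le_of_lt habs)]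
    exact hroot'
  have hev' : ∀ᶠ v in nhds v₀, Stmt5Aux.fdef b S (v, g v) = 0 := by
    filter_upwards [hev] with v hv
    rw [hv, hfd0]
  have hev2 : ∀ᶠ v in nhds v₀, g v ∈ Set.Ioo (2 * ρfun v₀ - 1) 1 := by
    apply hg.continuousAt.eventually_mem
    apply isOpen_Ioo.mem_nhds
    rw [hgv₀]
    constructor <;> linarith [hmem.1]
  have hEq : ρfun =ᶠ[nhdsWithin v₀ {v : S → ℝ | ∀ k, v k ∈ Set.Ico (0:ℝ) 1}] g := by
    filter_upwards [(hev'.and hev2).filter_mono nhdsWithin_le_nhds, self_mem_nhdsWithin]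
      with v hv hvs
    obtain ⟨hfde, hgIoo⟩ := hv
    have hvs' : ∀ k, v k ∈ Set.Ico (0:ℝ) 1 := hvs
    have hvIcc : ∀ k, v k ∈ Set.Icc (0:ℝ) 1 := fun k => ⟨(hvs' k).1, le_of_lt (hvs' k).2⟩
    have hggt : -1 < g v := by
      have := hgIoo.1
      linarith [hmem.1]
    have hFg : Stmt5Aux.Fv b S v (g v) = 0 := by
      rw [← Stmt5Aux.fdef_eq hb_sum hvIcc (abs_le.mpr ⟨le_of_lt hggt, le_of_lt hgIoo.2⟩)]
      exact hfde
    have hg0 : 0 ≤ g v := by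
      by_contra hneg
      push_neg at hneg
      have := Stmt5Aux.Fv_pos_of_neg hb_nonneg hb1 hS1 hb_sum hb_total hvIcc hggt hneg
      linarith [hFg ▸ this]
    obtain ⟨⟨hmemv, hrootv'⟩, hlbv⟩ := hρfun v hvIcc
    rw [hset] at hrootv'
    have hgmem : g v ∈ {u ∈ Set.Icc (0:ℝ) 1 |
        (∑' j : ℕ, if h : j ∈ S then b j * v ⟨j, h⟩ * u ^ j else b j * u ^ j) = 0} := by
      refine ⟨⟨hg0, le_of_lt hgIoo.2⟩, ?_⟩
      rw [hset]
      exact hFg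
    have hle : ρfun v ≤ g v := hlbv hgmem
    rcases lt_or_eq_of_le hle with hlt | heq
    · exfalso
      have hFv1 : Stmt5Aux.Fv b S v 1 < 0 :=
        Stmt5Aux.Fv_one_neg hb_nonneg hS1 hS hbS hb_sum hb_total hvs'
      have hbd := Stmt5Aux.root_bound hb_nonneg hb_sum hvIcc hmemv.1 hlt hgIoo.2 hrootv'
      have hcoef : 0 < (g v - ρfun v) / (1 - ρfun v) :=
        div_pos (by linarith) (by linarith [lt_of_le_of_lt hle hgIoo.2])
      have := mul_neg_of_pos_of_neg hcoef hFv1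
      linarith [hFg ▸ hbd]
    · exact heq
  exact hg.contDiffWithinAt.congr_of_eventuallyEq hEq (by rw [hgv₀])
end

section
/- If v = (v_k)_{k∈S} and v' = (v'_k)_{k∈S} are families with v_k, v'_k ∈ [0,1] and v_k ≤ v'_k for every k ∈ S, then ρ(v) ≤ ρ(v'). -/
theorem stmt_6 (b : ℕ → ℝ)
    (hb_nonneg : ∀ j, j ≠ 1 → 0 ≤ b j) (hb1 : b 1 < 0)
    (hb_sum : Summable b) (hb_total : ∑' j, b j = 0)
    (S : Finset ℕ) (hS : S.Nonempty) (hS1 : 1 ∉ S)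
    (hbS : ∀ k ∈ S, 0 < b k)
    (v v' : S → ℝ) (hv : ∀ k, v k ∈ Set.Icc (0:ℝ) 1) (hv' : ∀ k, v' k ∈ Set.Icc (0:ℝ) 1)
    (hle : ∀ k, v k ≤ v' k)
    (ρv ρv' : ℝ)
    (hρv : IsLeast {u ∈ Set.Icc (0:ℝ) 1 |
      (∑' j : ℕ, if h : j ∈ S then b j * v ⟨j, h⟩ * u ^ j else b j * u ^ j) = 0} ρv)
    (hρv' : IsLeast {u ∈ Set.Icc (0:ℝ) 1 |
      (∑' j : ℕ, if h : j ∈ S then b j * v' ⟨j, h⟩ * u ^ j else b j * u ^ j) = 0} ρv') :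
    ρv ≤ ρv' := by
  -- generic facts
  set f : ℕ → ℝ → ℝ := fun j u => if h : j ∈ S then b j * v ⟨j, h⟩ * u ^ j else b j * u ^ j
    with hf_def
  have hbound : ∀ j u, u ∈ Set.Icc (0:ℝ) 1 → ‖f j u‖ ≤ |b j| := by
    intro j u hu
    have hu0 := hu.1; have hu1 := hu.2
    have hpow : |u ^ j| ≤ 1 := by
      rw [abs_pow]
      exact pow_le_one₀ (abs_nonneg u) (abs_le.mpr ⟨by linarith, hu1⟩)
    simp only [hf_def, Real.norm_eq_abs]
    split
    · next h =>
      have hvb := hv ⟨j, h⟩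
      rw [abs_mul, abs_mul]
      calc |b j| * |v ⟨j, h⟩| * |u ^ j| ≤ |b j| * 1 * 1 := by
            apply mul_le_mul (mul_le_mul le_rfl (abs_le.mpr ⟨by linarith [hvb.1], hvb.2⟩)
              (abs_nonneg _) (abs_nonneg _)) hpow (abs_nonneg _)
            positivity
        _ = |b j| := by ring
    · rw [abs_mul]
      calc |b j| * |u ^ j| ≤ |b j| * 1 := mul_le_mul_of_nonneg_left hpow (abs_nonneg _)
        _ = |b j| := mul_one _
  have hsummf : ∀ u ∈ Set.Icc (0:ℝ) 1, Summable (fun j => f j u) := by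
    intro u hu
    exact Summable.of_norm_bounded hb_sum.abs (fun j => hbound j u hu)
  have hsummf' : ∀ u ∈ Set.Icc (0:ℝ) 1,
      Summable (fun j => if h : j ∈ S then b j * v' ⟨j, h⟩ * u ^ j else b j * u ^ j) := by
    intro u hu
    apply Summable.of_norm_bounded hb_sum.abs
    intro j
    have hu0 := hu.1; have hu1 := hu.2
    have hpow : |u ^ j| ≤ 1 := by
      rw [abs_pow]
      exact pow_le_one₀ (abs_nonneg u) (abs_le.mpr ⟨by linarith, hu1⟩)
    simp only [Real.norm_eq_abs]
    split
    · next h =>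
      have hvb := hv' ⟨j, h⟩
      rw [abs_mul, abs_mul]
      calc |b j| * |v' ⟨j, h⟩| * |u ^ j| ≤ |b j| * 1 * 1 := by
            apply mul_le_mul (mul_le_mul le_rfl (abs_le.mpr ⟨by linarith [hvb.1], hvb.2⟩)
              (abs_nonneg _) (abs_nonneg _)) hpow (abs_nonneg _)
            positivity
        _ = |b j| := by ring
    · rw [abs_mul]
      calc |b j| * |u ^ j| ≤ |b j| * 1 := mul_le_mul_of_nonneg_left hpow (abs_nonneg _)
        _ = |b j| := mul_one _
  -- ρv' is in [0,1]
  have hρ'mem : ρv' ∈ Set.Icc (0:ℝ) 1 := hρv'.1.1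
  -- F_v(ρv') ≤ 0
  have hFv_le : (∑' j : ℕ, f j ρv') ≤ 0 := by
    have hcmp : (∑' j : ℕ, f j ρv')
        ≤ ∑' j : ℕ, (if h : j ∈ S then b j * v' ⟨j, h⟩ * ρv' ^ j else b j * ρv' ^ j) := by
      apply Summable.tsum_le_tsum _ (hsummf _ hρ'mem) (hsummf' _ hρ'mem)
      intro j
      simp only [hf_def]
      split
      · next h =>
        have : 0 ≤ b j * ρv' ^ j := mul_nonneg (hbS j h).le (pow_nonneg hρ'mem.1 _)
        have := hle ⟨j, h⟩
        nlinarith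
      · exact le_rfl
    rw [hρv'.1.2] at hcmp
    exact hcmp
  -- F_v(0) ≥ 0
  have hFv0 : 0 ≤ (∑' j : ℕ, f j 0) := by
    apply tsum_nonneg
    intro j
    simp only [hf_def]
    split
    · next h =>
      have h1 : j ≠ 1 := fun hj => hS1 (hj ▸ h)
      exact mul_nonneg (mul_nonneg (hb_nonneg j h1) (hv ⟨j, h⟩).1) (pow_nonneg le_rfl _)
    · rcases eq_or_ne j 1 with rfl | h1
      · simp
      · exact mul_nonneg (hb_nonneg j h1) (pow_nonneg le_rfl _)
  -- continuity of F_v on [0,1]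
  have hcont : ContinuousOn (fun u => ∑' j : ℕ, f j u) (Set.Icc (0:ℝ) 1) := by
    apply continuousOn_tsum (u := fun j => |b j|) _ hb_sum.abs
    · intro j u hu; exact hbound j u hu
    · intro j
      simp only [hf_def]
      split <;> exact (Continuous.mul continuous_const (continuous_pow j)).continuousOn
  -- IVT on [0, ρv']
  have hsub : Set.Icc (0:ℝ) ρv' ⊆ Set.Icc (0:ℝ) 1 :=
    Set.Icc_subset_Icc le_rfl hρ'mem.2
  have hivt := intermediate_value_Icc' hρ'mem.1 (hcont.mono hsub)
  have h0mem : (0:ℝ) ∈ Set.Icc ((fun u => ∑' j, f j u) ρv') ((fun u => ∑' j, f j u) 0) :=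
    ⟨hFv_le, hFv0⟩
  obtain ⟨c, hc, hfc⟩ := hivt h0mem
  have : ρv ≤ c := hρv.2 ⟨hsub hc, hfc⟩
  linarith [hc.2]
end

section
/- The supremum of ρ(v) over all families v = (v_k)_{k∈S} with every v_k ∈ [0,1) equals ρ; in particular, the function t ↦ ρ((t)_{k∈S}) (all coordinates equal to t) tends to ρ as t → 1 from the left. -/
open Filter

private def cvf (b : ℕ → ℝ) (S : Finset ℕ) (v : S → ℝ) (j : ℕ) : ℝ :=
  if h : j ∈ S then b j * v ⟨j, h⟩ else b j

private lemma aux_teq (b : ℕ → ℝ) (S : Finset ℕ) (v : S → ℝ) (u : ℝ) :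
    (∑' j : ℕ, if h : j ∈ S then b j * v ⟨j, h⟩ * u ^ j else b j * u ^ j) =
    ∑' j : ℕ, cvf b S v j * u ^ j := by
  apply tsum_congr; intro j; unfold cvf; split <;> ring

private lemma aux_cvf_abs_le {b : ℕ → ℝ} {S : Finset ℕ} {v : S → ℝ}
    (hv : ∀ k, v k ∈ Set.Icc (0:ℝ) 1) (j : ℕ) : |cvf b S v j| ≤ |b j| := by
  unfold cvf; split
  · rename_i h
    have h1 := (hv ⟨j, h⟩).1
    have h2 := (hv ⟨j, h⟩).2
    rw [abs_mul]
    have : |v ⟨j, h⟩| ≤ 1 := abs_le.2 ⟨by linarith, h2⟩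
    exact mul_le_of_le_one_right (abs_nonneg _) this
  · exact le_rfl

private lemma aux_summable {c : ℕ → ℝ} (hc : Summable c) {u : ℝ} (hu : |u| ≤ 1) :
    Summable (fun j => c j * u ^ j) := by
  apply Summable.of_norm_bounded hc.abs
  intro j
  rw [Real.norm_eq_abs, abs_mul, abs_pow]
  exact mul_le_of_le_one_right (abs_nonneg _) (pow_le_one₀ (abs_nonneg u) hu)

private lemma aux_cont {c : ℕ → ℝ} (hc : Summable c) :
    ContinuousOn (fun u : ℝ => ∑' j, c j * u ^ j) (Set.Icc (0:ℝ) 1) := by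
  apply continuousOn_tsum (u := fun j => |c j|)
  · intro i; exact (continuous_const.mul (continuous_pow i)).continuousOn
  · exact hc.abs
  · intro n x hx
    rw [Real.norm_eq_abs, abs_mul, abs_pow]
    have hx1 : |x| ≤ 1 := abs_le.2 ⟨by linarith [hx.1], hx.2⟩
    exact mul_le_of_le_one_right (abs_nonneg _) (pow_le_one₀ (abs_nonneg x) hx1)

theorem stmt_7 (b : ℕ → ℝ)
    (hb_nonneg : ∀ j, j ≠ 1 → 0 ≤ b j) (hb1 : b 1 < 0)
    (hb_sum : Summable b) (hb_total : ∑' j, b j = 0)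
    (ρ : ℝ) (hρ : IsLeast {u ∈ Set.Icc (0:ℝ) 1 | (∑' j : ℕ, b j * u ^ j) = 0} ρ)
    (S : Finset ℕ) (hS : S.Nonempty) (hS1 : 1 ∉ S)
    (hbS : ∀ k ∈ S, 0 < b k)
    (ρfun : (S → ℝ) → ℝ)
    (hρfun : ∀ v : S → ℝ, (∀ k, v k ∈ Set.Icc (0:ℝ) 1) →
      IsLeast {u ∈ Set.Icc (0:ℝ) 1 |
        (∑' j : ℕ, if h : j ∈ S then b j * v ⟨j, h⟩ * u ^ j else b j * u ^ j) = 0} (ρfun v)) :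
    sSup (ρfun '' {v : S → ℝ | ∀ k, v k ∈ Set.Ico (0:ℝ) 1}) = ρ ∧
    Tendsto (fun t : ℝ => ρfun (fun _ => t)) (nhdsWithin 1 (Set.Iio 1)) (nhds ρ) := by
  have hρ0 : (0:ℝ) ≤ ρ := hρ.1.1.1
  have hρ1 : ρ ≤ 1 := hρ.1.1.2
  have hBρ : (∑' j : ℕ, b j * ρ ^ j) = 0 := hρ.1.2
  have hcvf_sum : ∀ (v : S → ℝ), (∀ k, v k ∈ Set.Icc (0:ℝ) 1) → Summable (cvf b S v) := by
    intro v hv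
    exact Summable.of_norm_bounded hb_sum.abs
      (fun j => by rw [Real.norm_eq_abs]; exact aux_cvf_abs_le hv j)
  -- ρfun v ≤ ρ for all v with coordinates in [0,1]
  have hroot_le : ∀ v : S → ℝ, (∀ k, v k ∈ Set.Icc (0:ℝ) 1) → ρfun v ≤ ρ := by
    intro v hv
    have habsρ : |ρ| ≤ 1 := abs_le.2 ⟨by linarith, hρ1⟩
    have hsummF : Summable (fun j => cvf b S v j * ρ ^ j) := aux_summable (hcvf_sum v hv) habsρ
    have hsummB : Summable (fun j => b j * ρ ^ j) := aux_summable hb_sum habsρ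
    have hFρ : (∑' j : ℕ, cvf b S v j * ρ ^ j) ≤ 0 := by
      rw [← hBρ]
      refine Summable.tsum_le_tsum (fun j => ?_) hsummF hsummB
      unfold cvf; split
      · rename_i h
        have hbk := (hbS j h).le
        have h1 := (hv ⟨j, h⟩).1
        have h2 := (hv ⟨j, h⟩).2
        have hpow : (0:ℝ) ≤ ρ ^ j := pow_nonneg hρ0 j
        exact mul_le_mul_of_nonneg_right (mul_le_of_le_one_right hbk h2) hpow
      · exact le_rfl
    have hF0 : 0 ≤ (∑' j : ℕ, cvf b S v j * (0:ℝ) ^ j) := by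
      apply tsum_nonneg
      intro j
      rcases Nat.eq_zero_or_pos j with h0 | h0
      · subst h0
        simp only [pow_zero, mul_one]
        unfold cvf; split
        · rename_i h
          exact mul_nonneg (hbS 0 h).le (hv ⟨0, h⟩).1
        · exact hb_nonneg 0 (by norm_num)
      · rw [zero_pow h0.ne', mul_zero]
    have hcontF : ContinuousOn (fun u : ℝ => ∑' j : ℕ, cvf b S v j * u ^ j) (Set.Icc 0 ρ) :=
      (aux_cont (hcvf_sum v hv)).mono (Set.Icc_subset_Icc le_rfl hρ1)
    obtain ⟨x, hx, hx0⟩ := intermediate_value_Icc' hρ0 hcontF ⟨hFρ, hF0⟩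
    have hle : ρfun v ≤ x := by
      apply (hρfun v hv).2
      exact ⟨⟨hx.1, le_trans hx.2 hρ1⟩, by rw [aux_teq]; exact hx0⟩
    linarith [hx.2]
  -- B is positive on [0, ρ)
  have hBcont : ContinuousOn (fun u : ℝ => ∑' j : ℕ, b j * u ^ j) (Set.Icc (0:ℝ) 1) :=
    aux_cont hb_sum
  have hB0 : (∑' j : ℕ, b j * (0:ℝ) ^ j) = b 0 := by
    rw [tsum_eq_single 0 (fun j hj => by rw [zero_pow hj, mul_zero])]
    simp
  have hBpos : ∀ u : ℝ, 0 ≤ u → u < ρ → 0 < ∑' j : ℕ, b j * u ^ j := by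
    intro u hu0 huρ
    have hρpos : 0 < ρ := lt_of_le_of_lt hu0 huρ
    have hb0 : 0 < b 0 := by
      rcases (hb_nonneg 0 (by norm_num)).lt_or_eq with h | h
      · exact h
      · exfalso
        have : (0:ℝ) ∈ {u ∈ Set.Icc (0:ℝ) 1 | (∑' j : ℕ, b j * u ^ j) = 0} :=
          ⟨⟨le_rfl, zero_le_one⟩, by rw [hB0, ← h]⟩
        linarith [hρ.2 this]
    by_contra hle
    push_neg at hle
    have hu1 : u ≤ 1 := le_trans huρ.le hρ1
    have hcont' : ContinuousOn (fun u : ℝ => ∑' j : ℕ, b j * u ^ j) (Set.Icc 0 u) :=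
      hBcont.mono (Set.Icc_subset_Icc le_rfl hu1)
    obtain ⟨x, hx, hx0⟩ := intermediate_value_Icc' hu0 hcont' ⟨hle, by rw [hB0]; exact hb0.le⟩
    have : ρ ≤ x := hρ.2 ⟨⟨hx.1, le_trans hx.2 hu1⟩, hx0⟩
    linarith [hx.2]
  -- decomposition F_t u = B u - (1-t) * ∑_{k∈S} b k u^k
  have hsplit : ∀ u t : ℝ, |u| ≤ 1 →
      (∑' j : ℕ, cvf b S (fun _ => t) j * u ^ j) =
      (∑' j : ℕ, b j * u ^ j) - (1 - t) * ∑ k ∈ S, b k * u ^ k := by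
    intro u t hu
    have hg : Summable (fun j : ℕ => if j ∈ S then (1 - t) * (b j * u ^ j) else 0) :=
      summable_of_ne_finset_zero (s := S) (fun j hj => by simp [hj])
    have hB : Summable (fun j : ℕ => b j * u ^ j) := aux_summable hb_sum hu
    have heq : (fun j : ℕ => cvf b S (fun _ => t) j * u ^ j) =
        (fun j : ℕ => b j * u ^ j - (if j ∈ S then (1 - t) * (b j * u ^ j) else 0)) := by
      funext j
      unfold cvf
      by_cases h : j ∈ S
      · rw [dif_pos h, if_pos h]; ring
      · rw [dif_neg h, if_neg h]; ring
    have hT : (∑' j : ℕ, (if j ∈ S then (1 - t) * (b j * u ^ j) else 0)) =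
        (1 - t) * ∑ k ∈ S, b k * u ^ k := by
      rw [tsum_eq_sum (s := S) (fun j hj => if_neg hj), Finset.mul_sum]
      exact Finset.sum_congr rfl (fun k hk => if_pos hk)
    rw [heq, Summable.tsum_sub hB hg, hT]
  -- key estimate
  have hkey : ∀ ε : ℝ, 0 < ε → ∃ η : ℝ, 0 < η ∧ η ≤ 1 ∧ ∀ t : ℝ, 1 - η < t → t < 1 →
      ρ - ε < ρfun (fun _ => t) := by
    intro ε hε
    by_cases hcase : ρ < ε
    · refine ⟨1, one_pos, le_rfl, fun t ht1 ht2 => ?_⟩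
      have hv : ∀ k : S, (fun _ : S => t) k ∈ Set.Icc (0:ℝ) 1 :=
        fun k => ⟨by linarith, ht2.le⟩
      have := (hρfun _ hv).1.1.1
      linarith
    · push_neg at hcase
      set a := ρ - ε with ha
      have ha0 : (0:ℝ) ≤ a := by linarith
      have ha1 : a ≤ 1 := by linarith
      obtain ⟨x₀, hx₀mem, hx₀min⟩ :=
        (isCompact_Icc (a := (0:ℝ)) (b := a)).exists_isMinOn ⟨0, le_rfl, ha0⟩
          (hBcont.mono (Set.Icc_subset_Icc le_rfl ha1))
      set δ := ∑' j : ℕ, b j * x₀ ^ j with hδdef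
      have hδ : 0 < δ := hBpos x₀ hx₀mem.1 (lt_of_le_of_lt hx₀mem.2 (by linarith))
      set C := ∑ k ∈ S, b k with hC
      have hCpos : 0 < C := Finset.sum_pos hbS hS
      obtain ⟨η, hηpos, hη1, hηC⟩ : ∃ η : ℝ, 0 < η ∧ η ≤ 1 ∧ η * C ≤ δ := by
        refine ⟨min 1 (δ / C), lt_min one_pos (div_pos hδ hCpos), min_le_left _ _, ?_⟩
        calc min 1 (δ / C) * C ≤ (δ / C) * C :=
              mul_le_mul_of_nonneg_right (min_le_right _ _) hCpos.le
          _ = δ := div_mul_cancel₀ δ hCpos.ne'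
      refine ⟨η, hηpos, hη1, ?_⟩
      intro t ht1 ht2
      have ht0 : 0 < t := by linarith
      have htC : (1 - t) * C < δ :=
        lt_of_lt_of_le (mul_lt_mul_of_pos_right (by linarith) hCpos) hηC
      have hvt : ∀ k : S, (fun _ : S => t) k ∈ Set.Icc (0:ℝ) 1 :=
        fun k => ⟨ht0.le, ht2.le⟩
      have hFpos : ∀ u : ℝ, u ∈ Set.Icc 0 a → 0 < ∑' j : ℕ, cvf b S (fun _ => t) j * u ^ j := by
        intro u hu
        have hu1 : u ≤ 1 := le_trans hu.2 ha1
        have habs : |u| ≤ 1 := abs_le.2 ⟨by linarith [hu.1], hu1⟩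
        rw [hsplit u t habs]
        have hsum_le : ∑ k ∈ S, b k * u ^ k ≤ C := by
          apply Finset.sum_le_sum
          intro k hk
          have := (hbS k hk).le
          nlinarith [pow_le_one₀ hu.1 hu1 (n := k)]
        have hBu : δ ≤ ∑' j : ℕ, b j * u ^ j := isMinOn_iff.mp hx₀min u hu
        have h2 : (1 - t) * ∑ k ∈ S, b k * u ^ k ≤ (1 - t) * C :=
          mul_le_mul_of_nonneg_left hsum_le (by linarith)
        linarith
      by_contra hcon
      push_neg at hcon
      have hmem := (hρfun (fun _ => t) hvt).1
      have hz : (∑' j : ℕ, cvf b S (fun _ => t) j * (ρfun (fun _ => t)) ^ j) = 0 := by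
        rw [← aux_teq]; exact hmem.2
      have := hFpos (ρfun (fun _ => t)) ⟨hmem.1.1, hcon⟩
      linarith
  constructor
  · apply IsLUB.csSup_eq
    · constructor
      · rintro x ⟨v, hv, rfl⟩
        exact hroot_le v (fun k => ⟨(hv k).1, (hv k).2.le⟩)
      · intro w hw
        apply le_of_forall_pos_le_add
        intro ε hε
        obtain ⟨η, hη, hη1, hk⟩ := hkey ε hε
        have h1 : ρ - ε < ρfun (fun _ => (1 - η / 2 : ℝ)) := hk _ (by linarith) (by linarith)
        have h2 : ρfun (fun _ => (1 - η / 2 : ℝ)) ≤ w := by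
          apply hw
          exact ⟨fun _ => (1 - η / 2 : ℝ), fun k => ⟨by linarith, by linarith⟩, rfl⟩
        linarith
    · exact ⟨ρfun (fun _ => 0), ⟨fun _ => 0, fun k => ⟨le_rfl, one_pos⟩, rfl⟩⟩
  · rw [Metric.tendsto_nhdsWithin_nhds]
    intro ε hε
    obtain ⟨η, hη, hη1, hk⟩ := hkey ε hε
    refine ⟨η, hη, fun t ht htd => ?_⟩
    have ht1 : t < 1 := ht
    have htd' : 1 - η < t := by
      rw [Real.dist_eq, abs_lt] at htd
      linarith [htd.1]
    have h1 : ρ - ε < ρfun (fun _ => t) := hk t htd' ht1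
    have h2 : ρfun (fun _ => t) ≤ ρ :=
      hroot_le _ (fun k => ⟨by linarith, ht1.le⟩)
    rw [Real.dist_eq, abs_lt]
    constructor <;> linarith
end

section
/- There exists a family (ρ_l)_{l∈ℕ^S} of nonnegative real numbers such that for every v = (v_k)_{k∈S} with all v_k ∈ [0,1), the series Σ_{l∈ℕ^S} ρ_l v^l (where v^l = Π_{k∈S} v_k^{l_k}) converges and its sum equals ρ(v). -/
set_option linter.unusedSectionVars false
set_option linter.unusedVariables false
set_option maxHeartbeats 1000000

open scoped ENNReal BigOperators
open Filter Topology

namespace Stmt8Aux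

variable {σ : Type*} [Fintype σ] [DecidableEq σ]

/-- monomial -/
noncomputable def mon (V : σ → ℝ≥0∞) (l : σ → ℕ) : ℝ≥0∞ := ∏ k, V k ^ l k

lemma mon_zero (V : σ → ℝ≥0∞) : mon V 0 = 1 := by simp [mon]

lemma mon_add (V : σ → ℝ≥0∞) (l m : σ → ℕ) : mon V (l + m) = mon V l * mon V m := by
  simp [mon, pow_add, Finset.prod_mul_distrib]

/-- evaluation of a coefficient family -/
noncomputable def ev (V : σ → ℝ≥0∞) (a : (σ → ℕ) → ℝ≥0∞) : ℝ≥0∞ :=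
  ∑' l : σ → ℕ, a l * mon V l

noncomputable def conv (a c : (σ → ℕ) → ℝ≥0∞) : (σ → ℕ) → ℝ≥0∞ :=
  fun n => ∑' p : {p : (σ → ℕ) × (σ → ℕ) // p.1 + p.2 = n}, a p.1.1 * c p.1.2

open Classical in
noncomputable def delta (e : σ → ℕ) : (σ → ℕ) → ℝ≥0∞ := fun n => if n = e then 1 else 0

noncomputable def cpow (a : (σ → ℕ) → ℝ≥0∞) : ℕ → (σ → ℕ) → ℝ≥0∞
  | 0 => delta 0
  | j + 1 => conv a (cpow a j)

lemma ev_zero (V : σ → ℝ≥0∞) : ev V (0 : (σ → ℕ) → ℝ≥0∞) = 0 := by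
  simp [ev]

lemma ev_mono (V : σ → ℝ≥0∞) {a c : (σ → ℕ) → ℝ≥0∞} (h : a ≤ c) : ev V a ≤ ev V c :=
  ENNReal.tsum_le_tsum fun l => mul_le_mul_left (h l) _

lemma ev_delta (V : σ → ℝ≥0∞) (e : σ → ℕ) : ev V (delta e) = mon V e := by
  rw [ev, tsum_eq_single e]
  · simp [delta]
  · intro l hl; simp [delta, hl]

def eqv (σ : Type*) : ((σ → ℕ) × (σ → ℕ)) ≃
    Σ n : σ → ℕ, {p : (σ → ℕ) × (σ → ℕ) // p.1 + p.2 = n} where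
  toFun p := ⟨p.1 + p.2, p, rfl⟩
  invFun x := x.2.1
  left_inv p := rfl
  right_inv x := by rcases x with ⟨n, p, h⟩; subst h; rfl

lemma ev_conv (V : σ → ℝ≥0∞) (a c : (σ → ℕ) → ℝ≥0∞) :
    ev V (conv a c) = ev V a * ev V c := by
  have hrhs : ev V a * ev V c
      = ∑' p : (σ → ℕ) × (σ → ℕ), (a p.1 * mon V p.1) * (c p.2 * mon V p.2) := by
    rw [ev, ev, ← ENNReal.tsum_mul_right, ENNReal.tsum_prod (f := fun l m => a l * mon V l * (c m * mon V m))]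
    exact tsum_congr fun l => (ENNReal.tsum_mul_left).symm
  rw [hrhs]
  have hl : ev V (conv a c)
      = ∑' x : Σ n : σ → ℕ, {p : (σ → ℕ) × (σ → ℕ) // p.1 + p.2 = n},
          a x.2.1.1 * c x.2.1.2 * mon V x.1 := by
    rw [ev, ENNReal.tsum_sigma']
    exact tsum_congr fun n => by rw [conv, ← ENNReal.tsum_mul_right]
  rw [hl, ← (eqv σ).tsum_eq]
  exact tsum_congr fun p => by
    simp only [eqv, Equiv.coe_fn_mk, mon_add]; ring

lemma ev_cpow (V : σ → ℝ≥0∞) (a : (σ → ℕ) → ℝ≥0∞) (j : ℕ) :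
    ev V (cpow a j) = (ev V a) ^ j := by
  induction j with
  | zero => simp [cpow, ev_delta, mon_zero]
  | succ j ih => rw [cpow, ev_conv, ih, pow_succ]; ring

lemma conv_mono {a a' c c' : (σ → ℕ) → ℝ≥0∞} (ha : a ≤ a') (hc : c ≤ c') :
    conv a c ≤ conv a' c' := fun n =>
  ENNReal.tsum_le_tsum fun p => mul_le_mul' (ha _) (hc _)

lemma cpow_mono {a a' : (σ → ℕ) → ℝ≥0∞} (ha : a ≤ a') (j : ℕ) :
    cpow a j ≤ cpow a' j := by
  induction j with
  | zero => exact le_rfl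
  | succ j ih => exact conv_mono ha ih


variable {σ : Type*} [Fintype σ] [DecidableEq σ]

-- NEW PART
/-- monotone convergence for tsum in ℝ≥0∞ -/
lemma tsum_iSup_mono {ι : Type*} {f : ℕ → ι → ℝ≥0∞} (hf : Monotone f) :
    ∑' i, ⨆ n, f n i = ⨆ n, ∑' i, f n i := by
  refine le_antisymm ?_ (iSup_le fun n => ENNReal.tsum_le_tsum fun i => le_iSup (fun n => f n i) n)
  rw [ENNReal.tsum_eq_iSup_sum]
  refine iSup_le fun s => ?_
  rw [ENNReal.finsetSum_iSup_of_monotone (fun i a b h => hf h i)]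
  exact iSup_mono fun n => ENNReal.sum_le_tsum s

noncomputable def gt' (S : Finset ℕ) (a : (S → ℕ) → ℝ≥0∞) (j : ℕ) : (S → ℕ) → ℝ≥0∞ :=
  if h : j ∈ S then conv (delta fun k => if (k : ℕ) = j then 1 else 0) (cpow a j)
  else if j = 1 then 0 else cpow a j

noncomputable def Tmap (b : ℕ → ℝ) (S : Finset ℕ) (a : (S → ℕ) → ℝ≥0∞) : (S → ℕ) → ℝ≥0∞ :=
  fun n => (ENNReal.ofReal (-b 1))⁻¹ * ∑' j : ℕ, ENNReal.ofReal (b j) * gt' S a j n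

lemma gt'_mono (S : Finset ℕ) {a a' : (S → ℕ) → ℝ≥0∞} (ha : a ≤ a') (j : ℕ) :
    gt' S a j ≤ gt' S a' j := by
  unfold gt'
  split_ifs with h h1
  · exact conv_mono le_rfl (cpow_mono ha j)
  · exact le_rfl
  · exact cpow_mono ha j

lemma Tmap_mono (b : ℕ → ℝ) (S : Finset ℕ) {a a' : (S → ℕ) → ℝ≥0∞} (ha : a ≤ a') :
    Tmap b S a ≤ Tmap b S a' := fun n =>
  mul_le_mul_right (ENNReal.tsum_le_tsum fun j => mul_le_mul_right (gt'_mono S ha j n) _) _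

lemma ev_gt' (S : Finset ℕ) (V : S → ℝ≥0∞) (a : (S → ℕ) → ℝ≥0∞) (j : ℕ) :
    ev V (gt' S a j) = (if h : j ∈ S then V ⟨j, h⟩ * (ev V a) ^ j
      else if j = 1 then 0 else (ev V a) ^ j) := by
  unfold gt'
  split_ifs with h h1
  · rw [ev_conv, ev_delta, ev_cpow]
    congr 1
    rw [mon]
    rw [Finset.prod_eq_single_of_mem (⟨j, h⟩ : S) (Finset.mem_univ _)]
    · simp
    · intro k _ hk
      have : (k : ℕ) ≠ j := fun hkj => hk (Subtype.ext hkj)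
      simp [this]
  · exact ev_zero V
  · exact ev_cpow V a j

lemma ev_Tmap (b : ℕ → ℝ) (S : Finset ℕ) (V : S → ℝ≥0∞) (a : (S → ℕ) → ℝ≥0∞) :
    ev V (Tmap b S a) = (ENNReal.ofReal (-b 1))⁻¹ *
      ∑' j : ℕ, (if h : j ∈ S then ENNReal.ofReal (b j) * V ⟨j, h⟩
        else if j = 1 then 0 else ENNReal.ofReal (b j)) * (ev V a) ^ j := by
  conv_lhs => rw [ev]
  unfold Tmap
  calc ∑' n, ((ENNReal.ofReal (-b 1))⁻¹ * ∑' j : ℕ, ENNReal.ofReal (b j) * gt' S a j n) * mon V n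
      = (ENNReal.ofReal (-b 1))⁻¹ *
        ∑' n, ∑' j : ℕ, ENNReal.ofReal (b j) * gt' S a j n * mon V n := by
        rw [← ENNReal.tsum_mul_left]
        exact tsum_congr fun n => by rw [mul_assoc, ENNReal.tsum_mul_right]
    _ = (ENNReal.ofReal (-b 1))⁻¹ *
        ∑' j : ℕ, ∑' n, ENNReal.ofReal (b j) * gt' S a j n * mon V n := by
        rw [ENNReal.tsum_comm]
    _ = _ := by
        congr 1
        refine tsum_congr fun j => ?_
        have : ∑' n, ENNReal.ofReal (b j) * gt' S a j n * mon V n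
            = ENNReal.ofReal (b j) * ev V (gt' S a j) := by
          rw [ev, ← ENNReal.tsum_mul_left]
          exact tsum_congr fun n => by ring
        rw [this, ev_gt' S V a j]
        split_ifs with h h1
        · ring
        · simp
        · ring


variable {σ : Type*} [Fintype σ] [DecidableEq σ]

-- KEY LEMMA
lemma key (b : ℕ → ℝ) (hb_nonneg : ∀ j, j ≠ 1 → 0 ≤ b j) (hb1 : b 1 < 0)
    (hb_sum : Summable b) (hb_total : ∑' j, b j = 0)
    (S : Finset ℕ) (hS1 : 1 ∉ S)
    (v : S → ℝ) (hv : ∀ k, v k ∈ Set.Icc (0:ℝ) 1) (ρ : ℝ)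
    (hρ : IsLeast {u ∈ Set.Icc (0:ℝ) 1 |
        (∑' j : ℕ, if h : j ∈ S then b j * v ⟨j, h⟩ * u ^ j else b j * u ^ j) = 0} ρ) :
    ev (fun k => ENNReal.ofReal (v k)) (fun l => ⨆ n, ((Tmap b S)^[n] 0) l)
      = ENNReal.ofReal ρ := by
  set V : S → ℝ≥0∞ := fun k => ENNReal.ofReal (v k) with hV
  set c : ℕ → ℝ := fun j => if h : j ∈ S then b j * v ⟨j, h⟩ else if j = 1 then 0 else b j with hc
  have hSne1 : ∀ {j : ℕ}, j ∈ S → j ≠ 1 := fun {j} h hj => hS1 (hj ▸ h)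
  have hc_nonneg : ∀ j, 0 ≤ c j := by
    intro j; rw [hc]; dsimp only
    split_ifs with h h1
    · exact mul_nonneg (hb_nonneg j (hSne1 h)) (hv ⟨j, h⟩).1
    · exact le_rfl
    · exact hb_nonneg j h1
  set d : ℕ → ℝ := fun j => if j = 1 then 0 else b j with hd
  have hcd : ∀ j, c j ≤ d j := by
    intro j; rw [hc, hd]; dsimp only
    split_ifs with h h1
    · exact absurd h1 (hSne1 h)
    · calc b j * v ⟨j, h⟩ ≤ b j * 1 :=
            mul_le_mul_of_nonneg_left (hv _).2 (hb_nonneg j (hSne1 h))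
        _ = b j := mul_one _
    · exact le_rfl
    · exact le_rfl
  have hdb : d = fun j => b j + (if j = 1 then -b 1 else 0) := by
    funext j; rw [hd]; dsimp only; split_ifs with h
    · rw [h]; ring
    · ring
  have h2sum : Summable (fun j : ℕ => if j = 1 then -b 1 else 0) :=
    summable_of_ne_finset_zero (s := {1}) (fun j hj => by
      simp only [Finset.mem_singleton] at hj; simp [hj])
  have hd_summable : Summable d := by
    rw [hdb]; exact hb_sum.add h2sum
  have hd_tsum : ∑' j, d j = -b 1 := by
    rw [hdb, Summable.tsum_add hb_sum h2sum, hb_total, tsum_ite_eq, zero_add]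
  have hc_summable : Summable c := Summable.of_nonneg_of_le hc_nonneg hcd hd_summable
  have hcu_summable : ∀ u : ℝ, 0 ≤ u → u ≤ 1 → Summable (fun j => c j * u ^ j) := by
    intro u hu0 hu1
    refine Summable.of_nonneg_of_le (fun j => mul_nonneg (hc_nonneg j) (pow_nonneg hu0 j))
      (fun j => ?_) hc_summable
    calc c j * u ^ j ≤ c j * 1 :=
        mul_le_mul_of_nonneg_left (pow_le_one₀ hu0 hu1) (hc_nonneg j)
      _ = c j := mul_one _
  have hsplit : ∀ u : ℝ, 0 ≤ u → u ≤ 1 →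
      (∑' j : ℕ, if h : j ∈ S then b j * v ⟨j, h⟩ * u ^ j else b j * u ^ j)
        = (∑' j, c j * u ^ j) + b 1 * u := by
    intro u hu0 hu1
    have h2 : Summable (fun j : ℕ => if j = 1 then b 1 * u else 0) :=
      summable_of_ne_finset_zero (s := {1}) (fun j hj => by
        simp only [Finset.mem_singleton] at hj; simp [hj])
    have heq : (fun j : ℕ => if h : j ∈ S then b j * v ⟨j, h⟩ * u ^ j else b j * u ^ j)
        = fun j => c j * u ^ j + (if j = 1 then b 1 * u else 0) := by
      funext j
      rw [hc]; dsimp only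
      by_cases h : j ∈ S
      · simp [h, hSne1 h]
      · by_cases h1 : j = 1
        · subst h1; simp [h, pow_one]
        · simp [h, h1]
    rw [heq, Summable.tsum_add (hcu_summable u hu0 hu1) h2, tsum_ite_eq]
  obtain ⟨⟨⟨hρ0, hρ1⟩, hρroot⟩, hρleast⟩ := hρ
  set β : ℝ≥0∞ := ENNReal.ofReal (-b 1) with hβ
  have hβ0 : β ≠ 0 := by
    rw [hβ, Ne, ENNReal.ofReal_eq_zero, not_le]; linarith
  have hβtop : β ≠ ⊤ := ENNReal.ofReal_ne_top
  set W : ℕ → ℝ≥0∞ := fun j => ENNReal.ofReal (c j) with hW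
  have hWc : ∀ j, (if h : j ∈ S then ENNReal.ofReal (b j) * V ⟨j, h⟩
      else if j = 1 then 0 else ENNReal.ofReal (b j)) = W j := by
    intro j; rw [hW, hc]; dsimp only
    split_ifs with h h1
    · rw [hV]; dsimp only; rw [← ENNReal.ofReal_mul (hb_nonneg j (hSne1 h))]
    · simp
    · rfl
  set Φ : ℝ≥0∞ → ℝ≥0∞ := fun u => β⁻¹ * ∑' j, W j * u ^ j with hΦ
  have hΦ_mono : Monotone Φ := fun x y hxy =>
    mul_le_mul_right (ENNReal.tsum_le_tsum fun j =>
      mul_le_mul_right (pow_le_pow_left' hxy j) _) _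
  have hbridge : ∀ u : ℝ, 0 ≤ u →
      ∑' j, W j * (ENNReal.ofReal u) ^ j = ENNReal.ofReal (∑' j, c j * u ^ j) ∨ True := by
    intro u hu; exact Or.inr trivial
  have hbridge' : ∀ u : ℝ, 0 ≤ u → u ≤ 1 →
      ∑' j, W j * (ENNReal.ofReal u) ^ j = ENNReal.ofReal (∑' j, c j * u ^ j) := by
    intro u hu0 hu1
    rw [ENNReal.ofReal_tsum_of_nonneg
      (fun j => mul_nonneg (hc_nonneg j) (pow_nonneg hu0 j)) (hcu_summable u hu0 hu1)]
    refine tsum_congr fun j => ?_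
    rw [ENNReal.ofReal_mul (hc_nonneg j), ENNReal.ofReal_pow hu0]
  have hfix : ∀ u : ℝ, 0 ≤ u → u ≤ 1 →
      (∑' j : ℕ, if h : j ∈ S then b j * v ⟨j, h⟩ * u ^ j else b j * u ^ j) = 0 →
      Φ (ENNReal.ofReal u) = ENNReal.ofReal u := by
    intro u hu0 hu1 hroot
    have hcsum : ∑' j, c j * u ^ j = (-b 1) * u := by
      have h := hsplit u hu0 hu1
      rw [hroot] at h
      linarith
    rw [hΦ]; dsimp only
    rw [hbridge' u hu0 hu1, hcsum, ENNReal.ofReal_mul (by linarith : (0:ℝ) ≤ -b 1), ← hβ,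
      ← mul_assoc, ENNReal.inv_mul_cancel hβ0 hβtop, one_mul]
  have hΦρ : Φ (ENNReal.ofReal ρ) = ENNReal.ofReal ρ := hfix ρ hρ0 hρ1 hρroot
  set A : ℕ → (S → ℕ) → ℝ≥0∞ := fun n => (Tmap b S)^[n] 0 with hA
  have hA_succ : ∀ n, A (n + 1) = Tmap b S (A n) := fun n => Function.iterate_succ_apply' _ n 0
  have hA_mono : Monotone A := by
    refine monotone_nat_of_le_succ ?_
    intro n
    induction n with
    | zero => intro l; exact zero_le
    | succ n ih => rw [hA_succ, hA_succ]; exact Tmap_mono b S ih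
  set E : ℕ → ℝ≥0∞ := fun n => ev V (A n) with hE
  have hE0 : E 0 = 0 := by
    rw [hE]; dsimp only; rw [hA]; dsimp only
    rw [Function.iterate_zero_apply]; exact ev_zero V
  have hE_succ : ∀ n, E (n + 1) = Φ (E n) := by
    intro n
    rw [hE]; dsimp only
    rw [hA_succ, ev_Tmap, hΦ, hβ]
    dsimp only
    congr 1
    exact tsum_congr fun j => by rw [hWc j]
  have hE_mono : Monotone E := fun m n h => ev_mono V (hA_mono h)
  have hE_le : ∀ n, E n ≤ ENNReal.ofReal ρ := by
    intro n
    induction n with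
    | zero => rw [hE0]; exact zero_le
    | succ n ih => rw [hE_succ, ← hΦρ]; exact hΦ_mono ih
  set uE : ℝ≥0∞ := ⨆ n, E n with huE
  have huE_le : uE ≤ ENNReal.ofReal ρ := iSup_le hE_le
  have huE_one : uE ≤ 1 := huE_le.trans (ENNReal.ofReal_le_one.mpr hρ1)
  have huE_ne : uE ≠ ⊤ := (huE_one.trans_lt ENNReal.one_lt_top).ne
  have hWle : ∀ j, W j ≤ ENNReal.ofReal (d j) := fun j => ENNReal.ofReal_le_ofReal (hcd j)
  have hSfin : ∑' j, W j * uE ^ j ≠ ⊤ := by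
    have h1 : ∑' j, W j * uE ^ j ≤ ∑' j, ENNReal.ofReal (d j) := by
      refine ENNReal.tsum_le_tsum fun j => ?_
      calc W j * uE ^ j ≤ W j * 1 ^ j := mul_le_mul_right (pow_le_pow_left' huE_one j) _
        _ = W j := by rw [one_pow, mul_one]
        _ ≤ ENNReal.ofReal (d j) := hWle j
    have h2 : ∑' j, ENNReal.ofReal (d j) = β := by
      rw [← ENNReal.ofReal_tsum_of_nonneg (fun j => (hc_nonneg j).trans (hcd j)) hd_summable,
        hd_tsum, hβ]
    exact (h1.trans_lt (h2.le.trans_lt (lt_of_le_of_ne le_top hβtop))).ne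
  have hpow : ∀ j : ℕ, uE ^ j = ⨆ n, E n ^ j := by
    intro j
    have h1 : Tendsto (fun n => E n ^ j) atTop (𝓝 (uE ^ j)) :=
      ((ENNReal.continuous_pow j).tendsto uE).comp (tendsto_atTop_iSup hE_mono)
    have h2 : Monotone fun n => E n ^ j := fun a b' hab => pow_le_pow_left' (hE_mono hab) j
    exact tendsto_nhds_unique h1 (tendsto_atTop_iSup h2)
  have hmain : ∀ N : ℕ, β⁻¹ * ∑ j ∈ Finset.range N, W j * uE ^ j ≤ uE := by
    intro N
    calc β⁻¹ * ∑ j ∈ Finset.range N, W j * uE ^ j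
        = β⁻¹ * ⨆ n, ∑ j ∈ Finset.range N, W j * E n ^ j := by
          congr 1
          have h1 : ∑ j ∈ Finset.range N, W j * uE ^ j
              = ∑ j ∈ Finset.range N, ⨆ n, W j * E n ^ j :=
            Finset.sum_congr rfl fun j _ => by rw [hpow j, ENNReal.mul_iSup]
          rw [h1]
          exact ENNReal.finsetSum_iSup_of_monotone (f := fun j n => W j * E n ^ j)
            (fun j a b' hab => mul_le_mul_right (pow_le_pow_left' (hE_mono hab) j) _)
      _ = ⨆ n, β⁻¹ * ∑ j ∈ Finset.range N, W j * E n ^ j := by rw [ENNReal.mul_iSup]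
      _ ≤ uE := by
          refine iSup_le fun n => ?_
          have h1 : β⁻¹ * ∑ j ∈ Finset.range N, W j * E n ^ j ≤ Φ (E n) := by
            rw [hΦ]; dsimp only
            exact mul_le_mul_right (ENNReal.sum_le_tsum _) _
          exact h1.trans ((hE_succ n).symm.le.trans (le_iSup E (n + 1)))
  have hΦle : Φ uE ≤ uE := by
    refine ENNReal.le_of_forall_pos_le_add fun ε hε huElt => ?_
    have htail := ENNReal.tendsto_sum_nat_add (fun j => W j * uE ^ j) hSfin
    have hβε : (0 : ℝ≥0∞) < β * ε := by
      refine ENNReal.mul_pos hβ0 ?_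
      exact ENNReal.coe_ne_zero.mpr hε.ne'
    obtain ⟨N, hN⟩ := (htail.eventually_lt_const hβε).exists
    have hsplitN : (∑' j : ℕ, W j * uE ^ j) = ∑ j ∈ Finset.range N, W j * uE ^ j
        + ∑' k : ℕ, W (k + N) * uE ^ (k + N) :=
      (Summable.sum_add_tsum_nat_add' (f := fun j => W j * uE ^ j) (k := N) ENNReal.summable).symm
    have step1 : Φ uE = β⁻¹ * ∑ j ∈ Finset.range N, W j * uE ^ j
        + β⁻¹ * ∑' k : ℕ, W (k + N) * uE ^ (k + N) := by
      rw [hΦ]; dsimp only; rw [hsplitN, mul_add]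
    have step2 : β⁻¹ * ∑' k : ℕ, W (k + N) * uE ^ (k + N) ≤ β⁻¹ * (β * ε) :=
      mul_le_mul_right hN.le _
    have step3 : β⁻¹ * (β * ↑ε) = (ε : ℝ≥0∞) := by
      rw [← mul_assoc, ENNReal.inv_mul_cancel hβ0 hβtop, one_mul]
    rw [step1]
    calc β⁻¹ * ∑ j ∈ Finset.range N, W j * uE ^ j
          + β⁻¹ * ∑' k : ℕ, W (k + N) * uE ^ (k + N)
        ≤ uE + β⁻¹ * (β * ε) := add_le_add (hmain N) step2
      _ = uE + ε := by rw [step3]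
  have hΦge : uE ≤ Φ uE := by
    refine iSup_le fun n => ?_
    cases n with
    | zero => rw [hE0]; exact zero_le
    | succ n => rw [hE_succ]; exact hΦ_mono (le_iSup E n)
  have hufix : Φ uE = uE := le_antisymm hΦle hΦge
  set s : ℝ := uE.toReal with hs
  have hs0 : 0 ≤ s := ENNReal.toReal_nonneg
  have hsρ : s ≤ ρ := by
    have h := ENNReal.toReal_mono ENNReal.ofReal_ne_top huE_le
    rwa [ENNReal.toReal_ofReal hρ0] at h
  have hs1 : s ≤ 1 := hsρ.trans hρ1
  have huEs : uE = ENNReal.ofReal s := (ENNReal.ofReal_toReal huE_ne).symm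
  have hfixs : Φ (ENNReal.ofReal s) = ENNReal.ofReal s := by rw [← huEs]; exact hufix
  have hcs_eq : ∑' j, c j * s ^ j = (-b 1) * s := by
    have h1 : β⁻¹ * ENNReal.ofReal (∑' j, c j * s ^ j) = ENNReal.ofReal s := by
      rw [← hbridge' s hs0 hs1]
      exact hfixs
    have h2 : ENNReal.ofReal (∑' j, c j * s ^ j) = β * ENNReal.ofReal s := by
      calc ENNReal.ofReal (∑' j, c j * s ^ j)
          = β * (β⁻¹ * ENNReal.ofReal (∑' j, c j * s ^ j)) := by
            rw [← mul_assoc, ENNReal.mul_inv_cancel hβ0 hβtop, one_mul]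
        _ = β * ENNReal.ofReal s := by rw [h1]
    rw [hβ, ← ENNReal.ofReal_mul (by linarith : (0:ℝ) ≤ -b 1)] at h2
    exact (ENNReal.ofReal_eq_ofReal_iff
      (tsum_nonneg fun j => mul_nonneg (hc_nonneg j) (pow_nonneg hs0 j))
      (mul_nonneg (by linarith) hs0)).mp h2
  have hroots : (∑' j : ℕ, if h : j ∈ S then b j * v ⟨j, h⟩ * s ^ j else b j * s ^ j) = 0 := by
    rw [hsplit s hs0 hs1, hcs_eq]; ring
  have hρs : ρ ≤ s := hρleast ⟨⟨hs0, hs1⟩, hroots⟩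
  have hsρ_eq : s = ρ := le_antisymm hsρ hρs
  have hev : ev V (fun l => ⨆ n, A n l) = uE := by
    rw [ev]
    calc ∑' l, (⨆ n, A n l) * mon V l
        = ∑' l, ⨆ n, A n l * mon V l := tsum_congr fun l => ENNReal.iSup_mul _ _
      _ = ⨆ n, ∑' l, A n l * mon V l :=
          tsum_iSup_mono (fun a b' hab l => mul_le_mul_left (hA_mono hab l) _)
      _ = uE := rfl
  rw [hA] at hev
  rw [hev, huEs, hsρ_eq]


end Stmt8Aux

theorem stmt_8 (b : ℕ → ℝ)
    (hb_nonneg : ∀ j, j ≠ 1 → 0 ≤ b j) (hb1 : b 1 < 0)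
    (hb_sum : Summable b) (hb_total : ∑' j, b j = 0)
    (S : Finset ℕ) (hS : S.Nonempty) (hS1 : 1 ∉ S)
    (hbS : ∀ k ∈ S, 0 < b k)
    (ρfun : (S → ℝ) → ℝ)
    (hρfun : ∀ v : S → ℝ, (∀ k, v k ∈ Set.Icc (0:ℝ) 1) →
      IsLeast {u ∈ Set.Icc (0:ℝ) 1 |
        (∑' j : ℕ, if h : j ∈ S then b j * v ⟨j, h⟩ * u ^ j else b j * u ^ j) = 0} (ρfun v)) :
    ∃ ρc : (S → ℕ) → ℝ, (∀ l, 0 ≤ ρc l) ∧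
      ∀ v : S → ℝ, (∀ k, v k ∈ Set.Ico (0:ℝ) 1) →
        HasSum (fun l : S → ℕ => ρc l * ∏ k, v k ^ l k) (ρfun v) := by
  classical
  set ρE : (S → ℕ) → ℝ≥0∞ := fun l => ⨆ n, ((Stmt8Aux.Tmap b S)^[n] 0) l with hρE
  refine ⟨fun l => (ρE l).toReal, fun l => ENNReal.toReal_nonneg, ?_⟩
  intro v hv
  have hv' : ∀ k, v k ∈ Set.Icc (0:ℝ) 1 := fun k => ⟨(hv k).1, (hv k).2.le⟩
  have hkey := Stmt8Aux.key b hb_nonneg hb1 hb_sum hb_total S hS1 v hv' _ (hρfun v hv')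
  set V : S → ℝ≥0∞ := fun k => ENNReal.ofReal (v k) with hV
  have hne : (∑' l : S → ℕ, ρE l * Stmt8Aux.mon V l) ≠ ⊤ := by
    rw [show (∑' l : S → ℕ, ρE l * Stmt8Aux.mon V l) = Stmt8Aux.ev V ρE from rfl, hρE, hkey]
    exact ENNReal.ofReal_ne_top
  have hHS := ENNReal.hasSum_toReal hne
  have hρnonneg : 0 ≤ ρfun v := (hρfun v hv').1.1.1
  have hval : (∑' l : S → ℕ, ρE l * Stmt8Aux.mon V l).toReal = ρfun v := by
    rw [show (∑' l : S → ℕ, ρE l * Stmt8Aux.mon V l) = Stmt8Aux.ev V ρE from rfl, hρE, hkey,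
      ENNReal.toReal_ofReal hρnonneg]
  have hfin : ∀ l : S → ℕ, ρE l * Stmt8Aux.mon V l ≠ ⊤ :=
    fun l => ((ENNReal.le_tsum l).trans_lt (lt_top_iff_ne_top.2 hne)).ne
  rw [← ENNReal.tsum_toReal_eq hfin, hval] at hHS
  have hterm : ∀ l : S → ℕ, (ρE l * Stmt8Aux.mon V l).toReal
      = (ρE l).toReal * ∏ k, v k ^ l k := by
    intro l
    rw [ENNReal.toReal_mul]
    congr 1
    rw [Stmt8Aux.mon, ENNReal.toReal_prod]
    exact Finset.prod_congr rfl fun k _ => by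
      rw [ENNReal.toReal_pow, ENNReal.toReal_ofReal (hv k).1]
  have hfun : (fun l : S → ℕ => (ρE l).toReal * ∏ k, v k ^ l k)
      = fun l : S → ℕ => (ρE l * Stmt8Aux.mon V l).toReal := funext fun l => (hterm l).symm
  rw [hfun]
  exact hHS
end

section
/- Assume b_0 > 0. Define the sequence (ρ_k)_{k≥0} by ρ_0 = 0, ρ_1 = −b_0/b_1, and, for k ≥ 1, ρ_{k+1} = −(1/b_1) Σ_{j=2}^{k+1} b_j ρ^{*(j)}_{k+1}, where ρ^{*(j)}_{n} = Σ_{l_1+⋯+l_j=n, l_i ≥ 0} ρ_{l_1}⋯ρ_{l_j} is the j-fold convolution (since ρ_0 = 0 this only involves ρ_i with i ≤ k, so the recursion is well defined). Then: ρ_k ≥ 0 for every k; for every v ∈ [0,1] the series Σ_{k=0}^∞ ρ_k v^k converges and its sum is the minimal nonnegative root in [0,1] of the equation b_0 v + Σ_{j=1}^∞ b_j u^j = 0 in the unknown u; and Σ_{k=0}^∞ ρ_k = ρ. -/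
open Finset

/-- j-fold convolution coefficient -/
noncomputable def stmtPP (r : ℕ → ℝ) (j n : ℕ) : ℝ :=
  ∑ t ∈ Finset.Nat.antidiagonalTuple j n, ∏ i, r (t i)

/-- partial generating function applied to conv coefficients -/
noncomputable def stmtTT (r : ℕ → ℝ) (v : ℝ) (j N : ℕ) : ℝ :=
  ∑ n ∈ Finset.range (N + 1), stmtPP r j n * v ^ n

/-- partial sum -/
noncomputable def stmtSS (r : ℕ → ℝ) (v : ℝ) (N : ℕ) : ℝ :=
  ∑ k ∈ Finset.range N, r k * v ^ k

lemma stmt_pair_bound {j n : ℕ} (hj : 2 ≤ j) {t : Fin j → ℕ}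
    (ht : ∑ i, t i = n) (hpos : ∀ i, t i ≠ 0) (i : Fin j) : t i < n := by
  have h0 : (0 : ℕ) < j := by omega
  have h1 : (1 : ℕ) < j := by omega
  set i0 : Fin j := ⟨0, h0⟩
  set i1 : Fin j := ⟨1, h1⟩
  have hne01 : i0 ≠ i1 := by simp [i0, i1, Fin.ext_iff]
  obtain ⟨i', hi'⟩ : ∃ i' : Fin j, i' ≠ i := by
    rcases eq_or_ne i i0 with rfl | h
    · exact ⟨i1, fun h => hne01 h.symm⟩
    · exact ⟨i0, fun h' => h h'.symm⟩
  have hsub : ({i, i'} : Finset (Fin j)) ⊆ univ := subset_univ _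
  have hsum2 : t i + t i' ≤ n := by
    have := Finset.sum_le_sum_of_subset hsub (f := t)
    rwa [Finset.sum_pair (fun h => hi' h.symm), ht] at this
  have := hpos i'
  omega

lemma stmt_prod_zero {r : ℕ → ℝ} (hr0 : r 0 = 0) {j : ℕ} {t : Fin j → ℕ}
    (i : Fin j) (h : t i = 0) : (∏ i, r (t i)) = 0 :=
  Finset.prod_eq_zero (Finset.mem_univ i) (by rw [h, hr0])

lemma stmtPP_eq_zero {r : ℕ → ℝ} (hr0 : r 0 = 0) {j n : ℕ} (h : n < j) :
    stmtPP r j n = 0 := by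
  refine Finset.sum_eq_zero fun t ht => ?_
  rw [Finset.Nat.mem_antidiagonalTuple] at ht
  by_contra hne
  have hpos : ∀ i, t i ≠ 0 := by
    intro i hi
    exact hne (stmt_prod_zero hr0 i hi)
  have : j ≤ n := by
    calc j = ∑ _i : Fin j, 1 := by simp
    _ ≤ ∑ i, t i := Finset.sum_le_sum fun i _ => Nat.one_le_iff_ne_zero.2 (hpos i)
    _ = n := ht
  omega

lemma stmtPP_nonneg_partial {r : ℕ → ℝ} (hr0 : r 0 = 0) {j n : ℕ} (hj : 2 ≤ j)
    (hr : ∀ i < n, 0 ≤ r i) : 0 ≤ stmtPP r j n := by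
  refine Finset.sum_nonneg fun t ht => ?_
  rw [Finset.Nat.mem_antidiagonalTuple] at ht
  by_cases h0 : ∃ i, t i = 0
  · obtain ⟨i, hi⟩ := h0
    rw [stmt_prod_zero hr0 i hi]
  · push_neg at h0
    exact Finset.prod_nonneg fun i _ => hr _ (stmt_pair_bound hj ht h0 i)

lemma stmtPP_nonneg {r : ℕ → ℝ} (hr : ∀ i, 0 ≤ r i) (j n : ℕ) : 0 ≤ stmtPP r j n :=
  Finset.sum_nonneg fun t _ => Finset.prod_nonneg fun i _ => hr _

lemma stmt_pow_expand (r : ℕ → ℝ) (v : ℝ) (m j : ℕ) :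
    (∑ k ∈ Finset.range m, r k * v ^ k) ^ j =
      ∑ p ∈ Fintype.piFinset (fun _ : Fin j => Finset.range m),
        (∏ i, r (p i)) * v ^ (∑ i, p i) := by
  have h1 : (∑ k ∈ Finset.range m, r k * v ^ k) ^ j
      = ∏ _i : Fin j, (∑ k ∈ Finset.range m, r k * v ^ k) := by
    rw [Finset.prod_const, Finset.card_univ, Fintype.card_fin]
  rw [h1, Finset.prod_univ_sum]
  refine Finset.sum_congr rfl fun p _ => ?_
  rw [Finset.prod_mul_distrib, Finset.prod_pow_eq_pow_sum]

lemma stmt_T_filter (r : ℕ → ℝ) (v : ℝ) (j N : ℕ) :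
    ∑ n ∈ Finset.range (N + 1), stmtPP r j n * v ^ n =
      ∑ p ∈ (Fintype.piFinset (fun _ : Fin j => Finset.range (N + 1))).filter
          (fun p => ∑ i, p i ≤ N),
        (∏ i, r (p i)) * v ^ (∑ i, p i) := by
  rw [← Finset.sum_fiberwise_of_maps_to (g := fun p : Fin j → ℕ => ∑ i, p i)
    (t := Finset.range (N + 1)) (fun p hp => by
      rw [Finset.mem_filter] at hp
      exact Finset.mem_range.2 (Nat.lt_succ_of_le hp.2))]
  refine Finset.sum_congr rfl fun n hn => ?_
  rw [Finset.mem_range] at hn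
  have hset : Finset.filter (fun p => ∑ i, p i = n)
        (Finset.filter (fun p => (∑ i, p i) ≤ N)
          (Fintype.piFinset (fun _ : Fin j => Finset.range (N + 1))))
      = Finset.Nat.antidiagonalTuple j n := by
    ext p
    simp only [Finset.mem_filter, Fintype.mem_piFinset, Finset.mem_range,
      Finset.Nat.mem_antidiagonalTuple]
    constructor
    · rintro ⟨⟨-, -⟩, h⟩; exact h
    · intro h
      refine ⟨⟨fun i => ?_, by omega⟩, h⟩
      have : p i ≤ ∑ i, p i := Finset.single_le_sum (fun i _ => Nat.zero_le _)
        (Finset.mem_univ i)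
      omega
  rw [hset, stmtPP, Finset.sum_mul]
  refine Finset.sum_congr rfl fun p hp => ?_
  rw [Finset.Nat.mem_antidiagonalTuple] at hp
  rw [hp]

lemma stmt_T_le_pow {r : ℕ → ℝ} {v : ℝ} (hr0 : r 0 = 0) (hr : ∀ k, 0 ≤ r k)
    (hv : 0 ≤ v) {j : ℕ} (hj : 2 ≤ j) (N : ℕ) :
    ∑ n ∈ Finset.range (N + 1), stmtPP r j n * v ^ n ≤
      (∑ k ∈ Finset.range N, r k * v ^ k) ^ j := by
  rw [stmt_T_filter, stmt_pow_expand]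
  set F : (Fin j → ℕ) → ℝ := fun p => (∏ i, r (p i)) * v ^ (∑ i, p i) with hF
  have hFnonneg : ∀ p, 0 ≤ F p := fun p =>
    mul_nonneg (Finset.prod_nonneg fun i _ => hr _) (pow_nonneg hv _)
  calc ∑ p ∈ (Fintype.piFinset (fun _ : Fin j => Finset.range (N + 1))).filter
          (fun p => ∑ i, p i ≤ N), F p
      = ∑ p ∈ Finset.filter (fun p => F p ≠ 0)
          ((Fintype.piFinset (fun _ : Fin j => Finset.range (N + 1))).filter
            (fun p => ∑ i, p i ≤ N)), F p := (Finset.sum_filter_ne_zero _).symm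
    _ ≤ ∑ p ∈ Fintype.piFinset (fun _ : Fin j => Finset.range N), F p := by
        refine Finset.sum_le_sum_of_subset_of_nonneg ?_ (fun p _ _ => hFnonneg p)
        intro p hp
        simp only [Finset.mem_filter, Fintype.mem_piFinset, Finset.mem_range] at hp ⊢
        obtain ⟨⟨-, hsle⟩, hFne⟩ := hp
        have hprod : (∏ i, r (p i)) ≠ 0 := fun h => hFne (by rw [hF]; simp [h])
        have hpos : ∀ i, p i ≠ 0 := by
          intro i hi
          exact hprod (stmt_prod_zero hr0 i hi)
        intro i
        have := stmt_pair_bound hj (rfl : ∑ i, p i = ∑ i, p i) hpos i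
        omega

lemma stmt_pow_le_T {r : ℕ → ℝ} {v : ℝ} (hr : ∀ k, 0 ≤ r k) (hv : 0 ≤ v)
    (j m N : ℕ) (h : j * m ≤ N) :
    (∑ k ∈ Finset.range (m + 1), r k * v ^ k) ^ j ≤
      ∑ n ∈ Finset.range (N + 1), stmtPP r j n * v ^ n := by
  rw [stmt_T_filter, stmt_pow_expand]
  refine Finset.sum_le_sum_of_subset_of_nonneg ?_ (fun p _ _ =>
    mul_nonneg (Finset.prod_nonneg fun i _ => hr _) (pow_nonneg hv _))
  intro p hp
  simp only [Fintype.mem_piFinset, Finset.mem_range, Finset.mem_filter] at hp ⊢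
  have hsum : ∑ i, p i ≤ N := by
    calc ∑ i, p i ≤ ∑ _i : Fin j, m := Finset.sum_le_sum fun i _ => by
          have := hp i; omega
      _ = j * m := by simp [Finset.sum_const, mul_comm]
      _ ≤ N := h
  refine ⟨fun i => ?_, hsum⟩
  have hji : 0 < j := i.pos
  have hm : m ≤ j * m := Nat.le_mul_of_pos_left m hji
  have := hp i
  omega

lemma stmtTT_zero_of_big {r : ℕ → ℝ} {v : ℝ} (hr0 : r 0 = 0) {j N : ℕ} (h : N < j) :
    stmtTT r v j N = 0 := by
  refine Finset.sum_eq_zero fun n hn => ?_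
  rw [Finset.mem_range] at hn
  rw [stmtPP_eq_zero hr0 (by omega), zero_mul]

lemma stmt_MI {b : ℕ → ℝ} {r : ℕ → ℝ} (hb1 : b 1 ≠ 0)
    (hr0 : r 0 = 0) (hr1 : r 1 = -b 0 / b 1)
    (hrec : ∀ k, 1 ≤ k → r (k + 1) = -(1 / b 1) *
      ∑ j ∈ Finset.Icc 2 (k + 1), b j * stmtPP r j (k + 1))
    (v : ℝ) :
    ∀ N, 1 ≤ N → -b 1 * (∑ n ∈ Finset.range (N + 1), r n * v ^ n)
      = b 0 * v + ∑ j ∈ Finset.Icc 2 N, b j * stmtTT r v j N := by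
  refine Nat.le_induction ?_ ?_
  · have h21 : (Finset.Icc 2 1 : Finset ℕ) = ∅ := by decide
    rw [h21, Finset.sum_empty, add_zero, Finset.sum_range_succ, Finset.sum_range_one,
      hr0, hr1]
    field_simp
    ring
  · intro N hN IH
    have hkey : -b 1 * r (N + 1) = ∑ j ∈ Finset.Icc 2 (N + 1), b j * stmtPP r j (N + 1) := by
      rw [hrec N hN]
      field_simp
    have hTT : ∀ j, stmtTT r v j (N + 1) = stmtTT r v j N + stmtPP r j (N + 1) * v ^ (N + 1) :=
      fun j => Finset.sum_range_succ _ _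
    have hins : Finset.Icc 2 (N + 1) = insert (N + 1) (Finset.Icc 2 N) :=
      (Finset.insert_Icc_right_eq_Icc_add_one (by omega)).symm
    have hnotmem : (N + 1) ∉ Finset.Icc 2 N := by simp
    calc -b 1 * ∑ n ∈ Finset.range (N + 1 + 1), r n * v ^ n
        = -b 1 * (∑ n ∈ Finset.range (N + 1), r n * v ^ n)
          + (-b 1 * r (N + 1)) * v ^ (N + 1) := by
          rw [Finset.sum_range_succ]; ring
      _ = b 0 * v + ∑ j ∈ Finset.Icc 2 N, b j * stmtTT r v j N
          + (∑ j ∈ Finset.Icc 2 (N + 1), b j * stmtPP r j (N + 1)) * v ^ (N + 1) := by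
          rw [IH, hkey]
      _ = b 0 * v + ∑ j ∈ Finset.Icc 2 (N + 1), b j * stmtTT r v j (N + 1) := by
          simp only [hTT, mul_add, Finset.sum_add_distrib]
          rw [hins, Finset.sum_insert hnotmem, Finset.sum_insert hnotmem,
            Finset.sum_insert hnotmem, stmtTT_zero_of_big hr0 (by omega)]
          simp only [add_mul, Finset.sum_mul, mul_assoc]
          ring

section
variable {b : ℕ → ℝ}

lemma stmt_habs (hb_nonneg : ∀ j, j ≠ 1 → 0 ≤ b j) (hb_sum : Summable b) :
    Summable (fun j => |b j|) := by
  have h2 : Summable (fun j : ℕ => if j = 1 then |b 1| - b 1 else 0) :=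
    summable_of_ne_finset_zero (s := {1}) (fun a ha => if_neg (by simpa using ha))
  refine (hb_sum.add h2).congr fun j => ?_
  rcases eq_or_ne j 1 with rfl | h
  · simp
  · rw [if_neg h, add_zero, abs_of_nonneg (hb_nonneg j h)]

lemma stmt_summable_pow (hb_nonneg : ∀ j, j ≠ 1 → 0 ≤ b j) (hb_sum : Summable b)
    {u : ℝ} (hu : |u| ≤ 1) (m : ℕ) : Summable (fun j => b (j + m) * u ^ (j + m)) := by
  have habs : Summable (fun j => |b (j + m)|) :=
    ((summable_nat_add_iff m).2 (stmt_habs hb_nonneg hb_sum))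
  refine Summable.of_abs (habs.of_nonneg_of_le (fun j => abs_nonneg _) fun j => ?_)
  rw [abs_mul, abs_pow]
  calc |b (j + m)| * |u| ^ (j + m) ≤ |b (j + m)| * 1 := by
        refine mul_le_mul_of_nonneg_left ?_ (abs_nonneg _)
        exact pow_le_one₀ (abs_nonneg u) hu
    _ = |b (j + m)| := mul_one _

lemma stmt_root_shift (hb_nonneg : ∀ j, j ≠ 1 → 0 ≤ b j) (hb_sum : Summable b)
    {u : ℝ} (hu : |u| ≤ 1) :
    (∑' j : ℕ, b (j + 1) * u ^ (j + 1)) = b 1 * u + ∑' j : ℕ, b (j + 2) * u ^ (j + 2) := by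
  rw [Summable.tsum_eq_zero_add (stmt_summable_pow hb_nonneg hb_sum hu 1)]
  simp only [zero_add, pow_one]

lemma stmt_tsum_shift_one (hb_sum : Summable b) (hb_total : ∑' j, b j = 0) :
    (∑' j : ℕ, b (j + 1)) = -b 0 := by
  have := Summable.tsum_eq_zero_add hb_sum
  rw [hb_total] at this
  linarith

lemma stmt_cont (hb_nonneg : ∀ j, j ≠ 1 → 0 ≤ b j) (hb_sum : Summable b) :
    ContinuousOn (fun u : ℝ => ∑' j : ℕ, b (j + 1) * u ^ (j + 1)) (Set.Icc (0:ℝ) 1) := by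
  refine continuousOn_tsum (f := fun (j : ℕ) (u : ℝ) => b (j + 1) * u ^ (j + 1))
    (u := fun j => |b (j + 1)|)
    (fun j => (continuous_const.mul (continuous_pow (j + 1))).continuousOn)
    ((summable_nat_add_iff 1).2 (stmt_habs hb_nonneg hb_sum)) fun j x hx => ?_
  rw [Real.norm_eq_abs, abs_mul, abs_pow]
  have hx1 : |x| ≤ 1 := abs_le.2 ⟨by linarith [hx.1], hx.2⟩
  calc |b (j + 1)| * |x| ^ (j + 1) ≤ |b (j + 1)| * 1 :=
        mul_le_mul_of_nonneg_left (pow_le_one₀ (abs_nonneg x) hx1) (abs_nonneg _)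
    _ = |b (j + 1)| := mul_one _

lemma stmt_exists_root (hb_nonneg : ∀ j, j ≠ 1 → 0 ≤ b j) (hb_sum : Summable b)
    (hb_total : ∑' j, b j = 0) (hb0 : 0 < b 0) {v : ℝ} (hv0 : 0 ≤ v) (hv1 : v ≤ 1) :
    ∃ s ∈ Set.Icc (0:ℝ) 1, b 0 * v + (∑' j : ℕ, b (j + 1) * s ^ (j + 1)) = 0 := by
  have hcont : ContinuousOn (fun u : ℝ => b 0 * v + ∑' j : ℕ, b (j + 1) * u ^ (j + 1))
      (Set.Icc (0:ℝ) 1) := continuousOn_const.add (stmt_cont hb_nonneg hb_sum)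
  have hg0 : b 0 * v + (∑' j : ℕ, b (j + 1) * (0:ℝ) ^ (j + 1)) = b 0 * v := by
    simp
  have hg1 : b 0 * v + (∑' j : ℕ, b (j + 1) * (1:ℝ) ^ (j + 1)) = b 0 * (v - 1) := by
    simp only [one_pow, mul_one]
    rw [stmt_tsum_shift_one hb_sum hb_total]
    ring
  have h0mem : (0:ℝ) ∈ Set.Icc (b 0 * v + ∑' j : ℕ, b (j + 1) * (1:ℝ) ^ (j + 1))
      (b 0 * v + ∑' j : ℕ, b (j + 1) * (0:ℝ) ^ (j + 1)) := by
    constructor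
    · rw [hg1]; nlinarith
    · rw [hg0]; positivity
  obtain ⟨s, hsmem, hgs⟩ := intermediate_value_Icc' zero_le_one hcont h0mem
  exact ⟨s, hsmem, hgs⟩

end

lemma stmt_sum_shift (f : ℕ → ℝ) : ∀ N, ∑ j ∈ Finset.Icc 2 N, f j
    = ∑ i ∈ Finset.range (N - 1), f (i + 2) := by
  intro N
  induction N with
  | zero => simp
  | succ N IH =>
    rcases Nat.eq_zero_or_pos N with rfl | hN
    · norm_num
    · rw [← Finset.insert_Icc_right_eq_Icc_add_one (by omega), Finset.sum_insert (by simp), IH]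
      have h1 : N + 1 - 1 = (N - 1) + 1 := by omega
      rw [h1, Finset.sum_range_succ]
      have h2 : N - 1 + 2 = N + 1 := by omega
      rw [h2]
      ring

open Filter Topology in
lemma stmt_main {b r : ℕ → ℝ}
    (hb_nonneg : ∀ j, j ≠ 1 → 0 ≤ b j) (hb1 : b 1 < 0)
    (hb_sum : Summable b) (hb_total : ∑' j, b j = 0) (hb0 : 0 < b 0)
    (hr0 : r 0 = 0) (hr1 : r 1 = -b 0 / b 1)
    (hrec : ∀ k, 1 ≤ k → r (k + 1) = -(1 / b 1) *
      ∑ j ∈ Finset.Icc 2 (k + 1), b j * stmtPP r j (k + 1))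
    (hrpos : ∀ k, 0 ≤ r k) {v : ℝ} (hv0 : 0 ≤ v) (hv1 : v ≤ 1) :
    ∃ s : ℝ, IsLeast {u ∈ Set.Icc (0:ℝ) 1 |
        b 0 * v + (∑' j : ℕ, b (j + 1) * u ^ (j + 1)) = 0} s ∧
      HasSum (fun k : ℕ => r k * v ^ k) s := by
  have hc : (0:ℝ) < -b 1 := neg_pos.2 hb1
  have hb1ne : b 1 ≠ 0 := ne_of_lt hb1
  have hb2nn : ∀ j : ℕ, 0 ≤ b (j + 2) := fun j => hb_nonneg _ (by omega)
  have hb2sum : Summable (fun j : ℕ => b (j + 2)) := (summable_nat_add_iff 2).2 hb_sum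
  have hchar : ∀ u : ℝ, 0 ≤ u → u ≤ 1 →
      ((b 0 * v + ∑' j : ℕ, b (j + 1) * u ^ (j + 1)) = 0 ↔
        -b 1 * u = b 0 * v + ∑' j : ℕ, b (j + 2) * u ^ (j + 2)) := by
    intro u hu0 hu1
    have habs : |u| ≤ 1 := abs_le.2 ⟨by linarith, hu1⟩
    rw [stmt_root_shift hb_nonneg hb_sum habs]
    constructor <;> intro h <;> linarith
  -- partial sums bounded by any root
  have hSle : ∀ s : ℝ, 0 ≤ s → s ≤ 1 →
      (b 0 * v + ∑' j : ℕ, b (j + 1) * s ^ (j + 1)) = 0 →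
      ∀ N, (∑ k ∈ Finset.range N, r k * v ^ k) ≤ s := by
    intro s hs0 hs1 hroot N
    have hkey : -b 1 * s = b 0 * v + ∑' j : ℕ, b (j + 2) * s ^ (j + 2) :=
      (hchar s hs0 hs1).1 hroot
    induction N with
    | zero => simpa using hs0
    | succ N IH =>
      rcases Nat.eq_zero_or_pos N with rfl | hN
      · simpa [hr0] using hs0
      have hMI := stmt_MI hb1ne hr0 hr1 hrec v N hN
      have hSN0 : 0 ≤ ∑ k ∈ Finset.range N, r k * v ^ k :=
        Finset.sum_nonneg fun k _ => mul_nonneg (hrpos k) (pow_nonneg hv0 k)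
      have hbd : ∑ j ∈ Finset.Icc 2 N, b j * stmtTT r v j N
          ≤ ∑' j : ℕ, b (j + 2) * s ^ (j + 2) := by
        calc ∑ j ∈ Finset.Icc 2 N, b j * stmtTT r v j N
            ≤ ∑ j ∈ Finset.Icc 2 N, b j * s ^ j := by
              refine Finset.sum_le_sum fun j hj => ?_
              rw [Finset.mem_Icc] at hj
              refine mul_le_mul_of_nonneg_left ?_ (hb_nonneg j (by omega))
              calc stmtTT r v j N ≤ (∑ k ∈ Finset.range N, r k * v ^ k) ^ j :=
                    stmt_T_le_pow hr0 hrpos hv0 hj.1 N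
                _ ≤ s ^ j := pow_le_pow_left₀ hSN0 IH j
          _ = ∑ i ∈ Finset.range (N - 1), b (i + 2) * s ^ (i + 2) :=
              stmt_sum_shift (fun j => b j * s ^ j) N
          _ ≤ ∑' j : ℕ, b (j + 2) * s ^ (j + 2) := by
              refine Summable.sum_le_tsum _ (fun i _ => mul_nonneg (hb2nn i) (pow_nonneg hs0 _)) ?_
              exact stmt_summable_pow hb_nonneg hb_sum (abs_le.2 ⟨by linarith, hs1⟩) 2
      have : -b 1 * (∑ n ∈ Finset.range (N + 1), r n * v ^ n) ≤ -b 1 * s := by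
        rw [hMI, hkey]
        linarith
      exact le_of_mul_le_mul_left this hc
  obtain ⟨s₀, hs₀mem, hs₀root⟩ := stmt_exists_root hb_nonneg hb_sum hb_total hb0 hv0 hv1
  have htermnn : ∀ k, 0 ≤ r k * v ^ k := fun k => mul_nonneg (hrpos k) (pow_nonneg hv0 k)
  have hsummable : Summable (fun k => r k * v ^ k) :=
    summable_of_sum_range_le htermnn (fun n => hSle s₀ hs₀mem.1 hs₀mem.2 hs₀root n)
  set L := ∑' k : ℕ, r k * v ^ k with hLdef
  have hLsum : HasSum (fun k => r k * v ^ k) L := hsummable.hasSum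
  have hStend : Tendsto (fun N => ∑ k ∈ Finset.range N, r k * v ^ k) atTop (𝓝 L) :=
    hLsum.tendsto_sum_nat
  have hSleL : ∀ N, ∑ k ∈ Finset.range N, r k * v ^ k ≤ L := fun N =>
    Summable.sum_le_tsum (Finset.range N) (fun i _ => htermnn i) hsummable
  have hLle : ∀ s : ℝ, 0 ≤ s → s ≤ 1 →
      (b 0 * v + ∑' j : ℕ, b (j + 1) * s ^ (j + 1)) = 0 → L ≤ s := fun s h1 h2 h3 =>
    Summable.tsum_le_of_sum_range_le hsummable (hSle s h1 h2 h3)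
  have hL0 : 0 ≤ L := tsum_nonneg htermnn
  have hL1 : L ≤ 1 := le_trans (hLle s₀ hs₀mem.1 hs₀mem.2 hs₀root) hs₀mem.2
  have hTle : ∀ j, 2 ≤ j → ∀ N, stmtTT r v j N ≤ L ^ j := by
    intro j hj N
    exact le_trans (stmt_T_le_pow hr0 hrpos hv0 hj N)
      (pow_le_pow_left₀ (Finset.sum_nonneg fun k _ => htermnn k) (hSleL N) j)
  have hTnn : ∀ j N, 0 ≤ stmtTT r v j N := fun j N =>
    Finset.sum_nonneg fun n _ => mul_nonneg (stmtPP_nonneg hrpos j n) (pow_nonneg hv0 n)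
  have hTmono : ∀ j, Monotone (fun N => stmtTT r v j N) := by
    intro j
    refine monotone_nat_of_le_succ fun N => ?_
    have : stmtTT r v j (N + 1) = stmtTT r v j N + stmtPP r j (N + 1) * v ^ (N + 1) :=
      Finset.sum_range_succ _ _
    rw [this]
    have := mul_nonneg (stmtPP_nonneg hrpos j (N + 1)) (pow_nonneg hv0 (N + 1))
    linarith
  have hTtend : ∀ j, 2 ≤ j → Tendsto (fun N => stmtTT r v j N) atTop (𝓝 (L ^ j)) := by
    intro j hj
    refine tendsto_atTop_isLUB (hTmono j) ⟨?_, fun w hw => ?_⟩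
    · rintro x ⟨N, rfl⟩
      exact hTle j hj N
    · have h1 : Tendsto (fun m : ℕ => (∑ k ∈ Finset.range (m + 1), r k * v ^ k) ^ j)
          atTop (𝓝 (L ^ j)) := (hStend.comp (tendsto_add_atTop_nat 1)).pow j
      refine le_of_tendsto h1 (Eventually.of_forall fun m => ?_)
      calc (∑ k ∈ Finset.range (m + 1), r k * v ^ k) ^ j ≤ stmtTT r v j (j * m) :=
            stmt_pow_le_T hrpos hv0 j m (j * m) le_rfl
        _ ≤ w := hw ⟨j * m, rfl⟩
  have hdom : Tendsto (fun N => ∑' i : ℕ, b (i + 2) * stmtTT r v (i + 2) N) atTop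
      (𝓝 (∑' i : ℕ, b (i + 2) * L ^ (i + 2))) := by
    refine tendsto_tsum_of_dominated_convergence (bound := fun i => b (i + 2)) hb2sum
      (fun i => (hTtend (i + 2) (by omega)).const_mul _)
      (Eventually.of_forall fun N i => ?_)
    rw [Real.norm_eq_abs, abs_mul, abs_of_nonneg (hb2nn i), abs_of_nonneg (hTnn _ _)]
    calc b (i + 2) * stmtTT r v (i + 2) N ≤ b (i + 2) * 1 :=
          mul_le_mul_of_nonneg_left
            (le_trans (hTle _ (by omega) N) (pow_le_one₀ hL0 hL1)) (hb2nn i)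
      _ = b (i + 2) := mul_one _
  have hts : ∀ N, 1 ≤ N → (∑' i : ℕ, b (i + 2) * stmtTT r v (i + 2) N)
      = ∑ j ∈ Finset.Icc 2 N, b j * stmtTT r v j N := by
    intro N hN
    rw [stmt_sum_shift (fun j => b j * stmtTT r v j N) N]
    refine tsum_eq_sum fun i hi => ?_
    rw [Finset.mem_range] at hi
    rw [stmtTT_zero_of_big hr0 (by omega), mul_zero]
  have hMIident : -b 1 * L = b 0 * v + ∑' i : ℕ, b (i + 2) * L ^ (i + 2) := by
    have h1 : Tendsto (fun N => -b 1 * (∑ n ∈ Finset.range (N + 1), r n * v ^ n))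
        atTop (𝓝 (-b 1 * L)) := (hStend.comp (tendsto_add_atTop_nat 1)).const_mul _
    have h2 : Tendsto (fun N => b 0 * v + ∑' i : ℕ, b (i + 2) * stmtTT r v (i + 2) N)
        atTop (𝓝 (b 0 * v + ∑' i : ℕ, b (i + 2) * L ^ (i + 2))) :=
      tendsto_const_nhds.add hdom
    refine tendsto_nhds_unique (h1.congr' ?_) h2
    filter_upwards [eventually_ge_atTop 1] with N hN
    rw [stmt_MI hb1ne hr0 hr1 hrec v N hN, hts N hN]
  have hLroot : b 0 * v + (∑' j : ℕ, b (j + 1) * L ^ (j + 1)) = 0 :=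
    (hchar L hL0 hL1).2 hMIident
  exact ⟨L, ⟨⟨⟨hL0, hL1⟩, hLroot⟩, fun s hs => hLle s hs.1.1 hs.1.2 hs.2⟩, hLsum⟩

theorem stmt_11 (b : ℕ → ℝ)
    (hb_nonneg : ∀ j, j ≠ 1 → 0 ≤ b j) (hb1 : b 1 < 0)
    (hb_sum : Summable b) (hb_total : ∑' j, b j = 0)
    (ρ : ℝ) (hρ : IsLeast {u ∈ Set.Icc (0:ℝ) 1 | (∑' j : ℕ, b j * u ^ j) = 0} ρ)
    (hb0 : 0 < b 0)
    (r : ℕ → ℝ) (hr0 : r 0 = 0) (hr1 : r 1 = -b 0 / b 1)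
    (hrec : ∀ k, 1 ≤ k → r (k + 1) = -(1 / b 1) *
      ∑ j ∈ Finset.Icc 2 (k + 1),
        b j * ∑ t ∈ Finset.Nat.antidiagonalTuple j (k + 1), ∏ i, r (t i)) :
    (∀ k, 0 ≤ r k) ∧
    (∀ v ∈ Set.Icc (0:ℝ) 1, ∃ s : ℝ,
      IsLeast {u ∈ Set.Icc (0:ℝ) 1 |
        b 0 * v + (∑' j : ℕ, b (j + 1) * u ^ (j + 1)) = 0} s ∧
      HasSum (fun k : ℕ => r k * v ^ k) s) ∧
    HasSum r ρ := by
  have hc : (0:ℝ) < -b 1 := neg_pos.2 hb1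
  have hrec' : ∀ k, 1 ≤ k → r (k + 1) = -(1 / b 1) *
      ∑ j ∈ Finset.Icc 2 (k + 1), b j * stmtPP r j (k + 1) := hrec
  -- Part 1
  have hrpos : ∀ k, 0 ≤ r k := by
    have H : ∀ k, ∀ i ≤ k, 0 ≤ r i := by
      intro k
      induction k with
      | zero =>
        intro i hi
        interval_cases i
        simp [hr0]
      | succ k IH =>
        intro i hi
        rcases Nat.lt_succ_iff_lt_or_eq.1 (Nat.lt_succ_of_le hi) with h | rfl
        · exact IH i (by omega)
        · rcases Nat.eq_zero_or_pos k with rfl | hk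
          · rw [hr1]
            have : -b 0 / b 1 = b 0 / (-b 1) := by
              rw [div_neg, neg_div]
            rw [this]
            exact le_of_lt (div_pos hb0 hc)
          · rw [hrec' k hk]
            refine mul_nonneg ?_ (Finset.sum_nonneg fun j hj => ?_)
            · have : 1 / b 1 < 0 := one_div_neg.2 hb1
              linarith
            · rw [Finset.mem_Icc] at hj
              exact mul_nonneg (hb_nonneg j (by omega))
                (stmtPP_nonneg_partial hr0 hj.1 fun i hi => IH i (by omega))
    exact fun k => H k k le_rfl
  refine ⟨hrpos, fun v hv => stmt_main hb_nonneg hb1 hb_sum hb_total hb0 hr0 hr1 hrec'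
    hrpos hv.1 hv.2, ?_⟩
  -- Part 3
  obtain ⟨s, hsleast, hsum⟩ := stmt_main hb_nonneg hb1 hb_sum hb_total hb0 hr0 hr1 hrec'
    hrpos (v := 1) zero_le_one le_rfl
  have hseteq : {u ∈ Set.Icc (0:ℝ) 1 |
        b 0 * 1 + (∑' j : ℕ, b (j + 1) * u ^ (j + 1)) = 0}
      = {u ∈ Set.Icc (0:ℝ) 1 | (∑' j : ℕ, b j * u ^ j) = 0} := by
    ext u
    simp only [Set.mem_setOf_eq, mul_one]
    refine and_congr_right fun hu => ?_
    have hsum_u : Summable (fun j : ℕ => b j * u ^ j) := by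
      have := stmt_summable_pow hb_nonneg hb_sum
        (abs_le.2 ⟨by linarith [hu.1], hu.2⟩) 0
      simpa using this
    rw [Summable.tsum_eq_zero_add hsum_u]
    simp
  rw [hseteq] at hsleast
  have hs : s = ρ := hsleast.unique hρ
  rw [← hs]
  simpa using hsum
end
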